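/- arXiv:1902.02028 — 4 statements merged into one kernel-verified Lean document; each statement's English description precedes it below -/
import Mathlib

section
/- Assume N ≥ 2, m > 0 and that g satisfies (g1)–(g2). Let λ ∈ ℝ and let u ∈ H¹(ℝ^N) be a nonzero function of class C² with ∫_{ℝ^N} u² = m, ∫_{ℝ^N} G(u) finite, solving −Δu + λu = g(u) pointwise on ℝ^N and satisfying the Pohozaev identity P(u) = 0. Then λm = ∫_{ℝ^N}(−((N−2)/2) g(u)u + N G(u)) ≥ (N − ((N−2)/2)β) ∫_{ℝ^N} G(u) > 0; in particular λ > 0. -/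
open MeasureTheory Filter Set Topology

noncomputable section

/-- Euclidean space ℝ^N. -/
abbrev Euc (N : ℕ) := EuclideanSpace ℝ (Fin N)

/-- `u ∈ H¹(ℝ^N)`: continuously differentiable with `∫ |u|² < ∞` and `∫ |∇u|² < ∞`. -/
def memH1 {N : ℕ} (u : Euc N → ℝ) : Prop :=
  ContDiff ℝ 1 u ∧ Integrable (fun x => (u x) ^ 2) ∧
    Integrable (fun x => ‖gradient u x‖ ^ 2)

/-- `u` is radially symmetric. -/
def IsRadial {N : ℕ} (u : Euc N → ℝ) : Prop :=
  ∃ w : ℝ → ℝ, ∀ x, u x = w ‖x‖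

/-- The primitive `G(ξ) = ∫₀^ξ g(τ) dτ`. -/
def Gfun (g : ℝ → ℝ) (ξ : ℝ) : ℝ := ∫ τ in (0:ℝ)..ξ, g τ

/-- Conditions (g1)–(g2) with exponents α, β. -/
def SatisfiesG12 (N : ℕ) (g : ℝ → ℝ) (α β : ℝ) : Prop :=
  Continuous g ∧
  2 + 4 / (N : ℝ) < α ∧ α < β ∧
  (3 ≤ N → β < 2 * (N : ℝ) / ((N : ℝ) - 2)) ∧
  ∀ ξ : ℝ, ξ ≠ 0 →
    0 < α * Gfun g ξ ∧ α * Gfun g ξ ≤ g ξ * ξ ∧ g ξ * ξ ≤ β * Gfun g ξ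

/-- The Laplacian of `u : ℝ^N → ℝ`. -/
def lap {N : ℕ} (u : Euc N → ℝ) (x : Euc N) : ℝ :=
  ∑ i, fderiv ℝ (fun y => fderiv ℝ u y (EuclideanSpace.single i 1)) x
    (EuclideanSpace.single i 1)

/-- The functional `I(u) = (1/2)∫|∇u|² − ∫ G(u)`. -/
def Ifun (N : ℕ) (g : ℝ → ℝ) (u : Euc N → ℝ) : ℝ :=
  (1/2) * (∫ x, ‖gradient u x‖ ^ 2) - ∫ x, Gfun g (u x)

/-- The Pohozaev functional `P(u) = ∫|∇u|² − N ∫ ((1/2)g(u)u − G(u))`. -/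
def Pfun (N : ℕ) (g : ℝ → ℝ) (u : Euc N → ℝ) : ℝ :=
  (∫ x, ‖gradient u x‖ ^ 2) - N * ∫ x, ((1/2) * g (u x) * u x - Gfun g (u x))

/-- The scaling `u_t(x) = t^{N/2} u(tx)`. -/
def scaled {N : ℕ} (u : Euc N → ℝ) (t : ℝ) : Euc N → ℝ :=
  fun x => t ^ ((N : ℝ)/2) * u (t • x)



lemma phi_bound : ∃ C : ℝ, 0 ≤ C ∧ (∀ t, |deriv Real.smoothTransition t| ≤ C) ∧
    (∀ t, t < 0 → deriv Real.smoothTransition t = 0) := by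
  have hzero : ∀ t : ℝ, t < 0 → deriv Real.smoothTransition t = 0 := by
    intro t ht
    have h : Real.smoothTransition =ᶠ[nhds t] (fun _ => (0:ℝ)) :=
      eventually_of_mem (Iio_mem_nhds ht)
        (fun s hs => Real.smoothTransition.zero_of_nonpos (le_of_lt hs))
    rw [h.deriv_eq]
    simp
  have hone : ∀ t : ℝ, 1 < t → deriv Real.smoothTransition t = 0 := by
    intro t ht
    have h : Real.smoothTransition =ᶠ[nhds t] (fun _ => (1:ℝ)) :=
      eventually_of_mem (Ioi_mem_nhds ht)
        (fun s hs => Real.smoothTransition.one_of_one_le (le_of_lt hs))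
    rw [h.deriv_eq]
    simp
  have hcs : HasCompactSupport (deriv Real.smoothTransition) := by
    refine HasCompactSupport.intro (isCompact_Icc (a := (0:ℝ)) (b := 1)) ?_
    intro t ht
    simp only [Set.mem_Icc, not_and_or, not_le] at ht
    rcases ht with h | h
    · exact hzero t h
    · exact hone t h
  have hcont : Continuous (deriv Real.smoothTransition) :=
    (Real.smoothTransition.contDiff (n := 2)).continuous_deriv (by norm_num)
  obtain ⟨C, hC⟩ := hcont.bounded_above_of_compact_support hcs
  exact ⟨C, le_trans (abs_nonneg _) (by simpa using hC 0), fun t => by simpa using hC t, hzero⟩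


section cutoff
variable {N : ℕ}

/-- cutoff function -/
def cut (N : ℕ) (R : ℝ) (x : Euc N) : ℝ := Real.smoothTransition (2 - ‖x‖^2 / R^2)

lemma cut_smooth (R : ℝ) : ContDiff ℝ 2 (cut N R) :=
  Real.smoothTransition.contDiff.comp
    (contDiff_const.sub ((contDiff_norm_sq ℝ).div_const _))

lemma cut_hasFDerivAt (R : ℝ) (x : Euc N) :
    HasFDerivAt (cut N R)
      ((deriv Real.smoothTransition (2 - ‖x‖^2 / R^2)) •
        (-((R^2)⁻¹ • ((2:ℝ) • innerSL ℝ x)))) x := by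
  have h1 : HasFDerivAt (fun y : Euc N => ‖y‖^2) ((2:ℝ) • innerSL ℝ x) x := by
    have h0 := (hasStrictFDerivAt_norm_sq x).hasFDerivAt
    rwa [← Nat.cast_smul_eq_nsmul ℝ, Nat.cast_ofNat] at h0
  have h2 : HasFDerivAt (fun y : Euc N => 2 - ‖y‖^2 / R^2)
      (-((R^2)⁻¹ • ((2:ℝ) • innerSL ℝ x))) x := by
    have h3 := (h1.const_mul ((R^2)⁻¹)).const_sub (2:ℝ)
    refine h3.congr_of_eventuallyEq (Eventually.of_forall fun y => ?_)
    ring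
  have hφ : HasDerivAt Real.smoothTransition
      (deriv Real.smoothTransition (2 - ‖x‖^2 / R^2)) (2 - ‖x‖^2 / R^2) :=
    ((Real.smoothTransition.contDiff (n := 2)).differentiable (by norm_num) _).hasDerivAt
  exact hφ.comp_hasFDerivAt x h2

lemma cut_diff (R : ℝ) : Differentiable ℝ (cut N R) :=
  fun x => ((cut_hasFDerivAt R x).differentiableAt)

lemma cut_nonneg (R : ℝ) (x : Euc N) : 0 ≤ cut N R x := Real.smoothTransition.nonneg _
lemma cut_le_one (R : ℝ) (x : Euc N) : cut N R x ≤ 1 := Real.smoothTransition.le_one _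

lemma cut_eq_one {R : ℝ} (hR : 0 < R) {x : Euc N} (hx : ‖x‖ < R) : cut N R x = 1 := by
  apply Real.smoothTransition.one_of_one_le
  rw [le_sub_iff_add_le]
  have h1 : ‖x‖^2 ≤ R^2 := by nlinarith [norm_nonneg x]
  have h2 : ‖x‖^2 / R^2 ≤ 1 := by
    rw [div_le_one (by positivity)]; exact h1
  linarith

lemma cut_eq_zero {R : ℝ} (hR : 0 < R) {x : Euc N} (hx : 2 * R < ‖x‖) : cut N R x = 0 := by
  apply Real.smoothTransition.zero_of_nonpos
  have h1 : 4 * R^2 < ‖x‖^2 := by nlinarith [norm_nonneg x]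
  rw [sub_nonpos, le_div_iff₀ (by positivity)]
  nlinarith

lemma cut_compactSupport {R : ℝ} (hR : 0 < R) : HasCompactSupport (cut N R) := by
  refine HasCompactSupport.intro (isCompact_closedBall (0 : Euc N) (2*R)) ?_
  intro x hx
  simp only [Metric.mem_closedBall, dist_zero_right, not_le] at hx
  exact cut_eq_zero hR hx

lemma cut_fderiv_bound {C : ℝ} (hC0 : 0 ≤ C)
    (hCb : ∀ t, |deriv Real.smoothTransition t| ≤ C)
    (hCz : ∀ t, t < 0 → deriv Real.smoothTransition t = 0)
    {R : ℝ} (hR : 1 ≤ R) (x : Euc N) :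
    ‖fderiv ℝ (cut N R) x‖ ≤ 4 * C := by
  have hR0 : (0:ℝ) < R := lt_of_lt_of_le one_pos hR
  rw [(cut_hasFDerivAt R x).fderiv]
  by_cases hz : deriv Real.smoothTransition (2 - ‖x‖^2 / R^2) = 0
  · rw [hz]
    simp
    positivity
  · have ht : (0:ℝ) ≤ 2 - ‖x‖^2 / R^2 := not_lt.1 fun h => hz (hCz _ h)
    have hx2 : ‖x‖^2 ≤ 2 * R^2 := by
      rw [sub_nonneg, div_le_iff₀ (by positivity)] at ht
      nlinarith
    have hxle : ‖x‖ ≤ 2 * R := by nlinarith [norm_nonneg x]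
    rw [norm_smul, norm_neg, norm_smul, norm_smul, innerSL_apply_norm]
    have h1 : ‖(R^2)⁻¹‖ = (R^2)⁻¹ := by
      rw [Real.norm_eq_abs, abs_of_nonneg]; positivity
    have h2 : ‖(2:ℝ)‖ = 2 := by norm_num
    rw [h1, h2, Real.norm_eq_abs]
    have h3 : |deriv Real.smoothTransition (2 - ‖x‖^2 / R^2)| ≤ C := hCb _
    have h4 : (R^2)⁻¹ * (2 * ‖x‖) ≤ 4 / R := by
      have hx' : 2 * ‖x‖ ≤ 4 * R := by linarith
      have he : (R^2)⁻¹ * (4 * R) = 4 / R := by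
        field_simp
      calc (R^2)⁻¹ * (2 * ‖x‖) ≤ (R^2)⁻¹ * (4 * R) :=
            mul_le_mul_of_nonneg_left hx' (by positivity)
        _ = 4 / R := he
    have h5 : 4 / R ≤ 4 := by
      rw [div_le_iff₀ hR0]; nlinarith
    calc |deriv Real.smoothTransition (2 - ‖x‖^2 / R^2)| * ((R^2)⁻¹ * (2 * ‖x‖))
        ≤ C * (4 / R) := by
          apply mul_le_mul h3 h4 (by positivity) hC0
      _ ≤ C * 4 := by nlinarith
      _ = 4 * C := by ring

end cutoff

section nehari
variable {N : ℕ}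

lemma nehari (u : Euc N → ℝ) (huC2 : ContDiff ℝ 2 u)
    (hu2 : Integrable (fun x => u x ^ 2))
    (hS : Integrable (fun x => ∑ i, (fderiv ℝ u x (EuclideanSpace.single i 1)) ^ 2))
    (hlap : Integrable (fun x => u x * lap u x)) :
    ∫ x, u x * lap u x = - ∫ x, ∑ i, (fderiv ℝ u x (EuclideanSpace.single i 1)) ^ 2 := by
  obtain ⟨C, hC0, hCb, hCz⟩ := phi_bound
  set e : Fin N → Euc N := fun i => EuclideanSpace.single i 1 with he
  set D : Fin N → Euc N → ℝ := fun i x => fderiv ℝ u x (e i) with hD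
  set D2 : Fin N → Euc N → ℝ :=
    fun i x => fderiv ℝ (fun y => fderiv ℝ u y (e i)) x (e i) with hD2
  set S : Euc N → ℝ := fun x => ∑ i, (D i x)^2 with hSdef
  have hSint : Integrable S := hS
  -- basic smoothness
  have udiff : Differentiable ℝ u := huC2.differentiable (by norm_num)
  have ucont : Continuous u := huC2.continuous
  have hfd1 : ContDiff ℝ 1 (fderiv ℝ u) := huC2.fderiv_right (by norm_num)
  have hDiC : ∀ i, ContDiff ℝ 1 (fun y => fderiv ℝ u y (e i)) :=
    fun i => hfd1.clm_apply contDiff_const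
  have hDicont : ∀ i, Continuous (D i) := fun i => (hDiC i).continuous
  have hDidiff : ∀ i, Differentiable ℝ (fun y => fderiv ℝ u y (e i)) :=
    fun i => (hDiC i).differentiable one_ne_zero
  have hD2cont : ∀ i, Continuous (D2 i) := fun i =>
    (ContinuousLinearMap.apply ℝ ℝ (e i)).continuous.comp
      ((hDiC i).continuous_fderiv one_ne_zero)
  have hScont : Continuous S := continuous_finset_sum _ (fun i _ => ((hDicont i).pow 2))
  have hSnn : ∀ x, 0 ≤ S x := fun x => Finset.sum_nonneg (fun i _ => sq_nonneg _)
  have hlapcont : Continuous (lap u) :=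
    continuous_finset_sum _ (fun i (_ : i ∈ Finset.univ) => hD2cont i)
  have hlapsum : ∀ x, lap u x = ∑ i, D2 i x := fun x => rfl
  -- cutoffs
  set R : ℕ → ℝ := fun n => (n : ℝ) + 1 with hRdef
  have hR1 : ∀ n, 1 ≤ R n := fun n => by
    simp only [hRdef, le_add_iff_nonneg_left]
    positivity
  have hR0 : ∀ n, 0 < R n := fun n => lt_of_lt_of_le one_pos (hR1 n)
  set χ : ℕ → Euc N → ℝ := fun n => cut N (R n) with hχdef
  have hχsm : ∀ n, ContDiff ℝ 2 (χ n) := fun n => cut_smooth _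
  have hχcont : ∀ n, Continuous (χ n) := fun n => (hχsm n).continuous
  have hχdiff : ∀ n, Differentiable ℝ (χ n) := fun n => cut_diff _
  have hχcs : ∀ n, HasCompactSupport (χ n) := fun n => cut_compactSupport (hR0 n)
  have hχb : ∀ n x, ‖fderiv ℝ (χ n) x‖ ≤ 4*C :=
    fun n x => cut_fderiv_bound hC0 hCb hCz (hR1 n) x
  have hχ'cont : ∀ n, Continuous (fun x => fderiv ℝ (χ n) x) :=
    fun n => (hχsm n).continuous_fderiv (by norm_num)
  have hχ'icont : ∀ n i, Continuous (fun x => fderiv ℝ (χ n) x (e i)) :=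
    fun n i => (ContinuousLinearMap.apply ℝ ℝ (e i)).continuous.comp (hχ'cont n)
  have hχ'ib : ∀ n i x, |fderiv ℝ (χ n) x (e i)| ≤ 4*C := by
    intro n i x
    calc |fderiv ℝ (χ n) x (e i)| = ‖fderiv ℝ (χ n) x (e i)‖ := (Real.norm_eq_abs _).symm
      _ ≤ ‖fderiv ℝ (χ n) x‖ * ‖e i‖ := ContinuousLinearMap.le_opNorm _ _
      _ = ‖fderiv ℝ (χ n) x‖ := by
          rw [he]
          simp [EuclideanSpace.norm_single]
      _ ≤ 4*C := hχb n x
  -- pointwise limits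
  have hxltR : ∀ (x : Euc N) n, (⌈‖x‖⌉₊ : ℕ) ≤ n → ‖x‖ < R n := by
    intro x n hn
    calc ‖x‖ ≤ (⌈‖x‖⌉₊ : ℝ) := Nat.le_ceil _
      _ ≤ (n : ℝ) := by exact_mod_cast hn
      _ < R n := by simp [hRdef]
  have hχtend : ∀ x : Euc N, ∀ᶠ n in atTop, χ n x = 1 := by
    intro x
    filter_upwards [eventually_ge_atTop ⌈‖x‖⌉₊] with n hn
    exact cut_eq_one (hR0 n) (hxltR x n hn)
  have hχ'tend : ∀ x : Euc N, ∀ᶠ n in atTop, fderiv ℝ (χ n) x = 0 := by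
    intro x
    filter_upwards [eventually_ge_atTop ⌈‖x‖⌉₊] with n hn
    have hev : χ n =ᶠ[nhds x] (fun _ => (1:ℝ)) := by
      refine eventually_of_mem (U := Metric.ball (0 : Euc N) (R n))
        (Metric.isOpen_ball.mem_nhds ?_) ?_
      · simpa [Metric.mem_ball, dist_zero_right] using hxltR x n hn
      · intro y hy
        simp only [Metric.mem_ball, dist_zero_right] at hy
        exact cut_eq_one (hR0 n) hy
    rw [hev.fderiv_eq]
    simp
  -- integrability helpers
  have intχ : ∀ (n : ℕ) (f : Euc N → ℝ), Continuous f →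
      Integrable (fun x => χ n x * f x) := by
    intro n f hf
    exact Continuous.integrable_of_hasCompactSupport ((hχcont n).mul hf)
      ((hχcs n).mul_right)
  have I_χuD2 : ∀ n i, Integrable (fun x => (χ n x * u x) * D2 i x) := by
    intro n i
    have := intχ n (fun x => u x * D2 i x) (ucont.mul (hD2cont i))
    refine this.congr ?_
    exact Eventually.of_forall fun x => by ring
  have I_χuD : ∀ n i, Integrable (fun x => (χ n x * u x) * D i x) := by
    intro n i
    have := intχ n (fun x => u x * D i x) (ucont.mul (hDicont i))
    refine this.congr ?_
    exact Eventually.of_forall fun x => by ring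
  have I_χD2sq : ∀ n i, Integrable (fun x => χ n x * (D i x)^2) :=
    fun n i => intχ n _ ((hDicont i).pow 2)
  have I_uχ'D : ∀ n i, Integrable (fun x => u x * fderiv ℝ (χ n) x (e i) * D i x) := by
    intro n i
    apply Continuous.integrable_of_hasCompactSupport
      ((ucont.mul (hχ'icont n i)).mul (hDicont i))
    exact (((hχcs n).fderiv_apply ℝ (e i)).mul_left).mul_right
  have I_f'g : ∀ n i, Integrable
      (fun x => (fderiv ℝ (fun y => χ n y * u y) x (e i)) * D i x) := by
    intro n i
    have hprod : ContDiff ℝ 2 (fun y => χ n y * u y) := (hχsm n).mul huC2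
    apply Continuous.integrable_of_hasCompactSupport
    · exact ((ContinuousLinearMap.apply ℝ ℝ (e i)).continuous.comp
        (hprod.continuous_fderiv (by norm_num))).mul (hDicont i)
    · exact (((hχcs n).mul_right).fderiv_apply ℝ (e i)).mul_right
  -- integration by parts
  have ibp : ∀ n i, ∫ x, (χ n x * u x) * D2 i x
      = - ∫ x, (fderiv ℝ (fun y => χ n y * u y) x (e i)) * D i x := by
    intro n i
    exact integral_mul_fderiv_eq_neg_fderiv_mul_of_integrable (I_f'g n i) (I_χuD2 n i)
      (I_χuD n i) (fun x _ => ((hχdiff n).mul udiff) x) (fun x _ => hDidiff i x)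
  have ibp2 : ∀ n i, ∫ x, (χ n x * u x) * D2 i x
      = - ((∫ x, χ n x * (D i x)^2) + ∫ x, u x * fderiv ℝ (χ n) x (e i) * D i x) := by
    intro n i
    rw [ibp n i]
    congr 1
    rw [← integral_add (I_χD2sq n i) (I_uχ'D n i)]
    refine integral_congr_ae (Eventually.of_forall fun x => ?_)
    have hm := fderiv_fun_mul ((hχdiff n) x) (udiff x)
    calc (fderiv ℝ (fun y => χ n y * u y) x (e i)) * D i x
        = (χ n x • fderiv ℝ u x + u x • fderiv ℝ (χ n) x) (e i) * D i x := by rw [hm]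
      _ = (χ n x * D i x + u x * fderiv ℝ (χ n) x (e i)) * D i x := by
          simp [ContinuousLinearMap.add_apply, ContinuousLinearMap.smul_apply, smul_eq_mul, D]
      _ = χ n x * (D i x)^2 + u x * fderiv ℝ (χ n) x (e i) * D i x := by ring
  -- summing over i
  have sumL : ∀ n, ∫ x, χ n x * (u x * lap u x) = ∑ i, ∫ x, (χ n x * u x) * D2 i x := by
    intro n
    rw [← integral_finset_sum _ (fun i _ => I_χuD2 n i)]
    refine integral_congr_ae (Eventually.of_forall fun x => ?_)
    show χ n x * (u x * lap u x) = ∑ i, χ n x * u x * D2 i x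
    rw [hlapsum x, Finset.mul_sum, Finset.mul_sum]
    exact Finset.sum_congr rfl fun i _ => by ring
  have sumR : ∀ n, ∫ x, χ n x * S x = ∑ i, ∫ x, χ n x * (D i x)^2 := by
    intro n
    rw [← integral_finset_sum _ (fun i _ => I_χD2sq n i)]
    refine integral_congr_ae (Eventually.of_forall fun x => ?_)
    rw [hSdef]
    simp only [Finset.mul_sum]
  have main : ∀ n, (∫ x, χ n x * (u x * lap u x)) + ((∫ x, χ n x * S x)
      + (∑ i, ∫ x, u x * fderiv ℝ (χ n) x (e i) * D i x)) = 0 := by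
    intro n
    rw [sumL n, sumR n]
    have h1 : ∑ i, ∫ x, (χ n x * u x) * D2 i x
        = ∑ i, (- ((∫ x, χ n x * (D i x)^2) + ∫ x, u x * fderiv ℝ (χ n) x (e i) * D i x)) :=
      Finset.sum_congr rfl fun i _ => ibp2 n i
    rw [h1]
    simp only [neg_add, Finset.sum_add_distrib, Finset.sum_neg_distrib]
    ring
  -- limits
  have limA : Tendsto (fun n => ∫ x, χ n x * (u x * lap u x)) atTop
      (nhds (∫ x, u x * lap u x)) := by
    apply tendsto_integral_of_dominated_convergence (fun x => |u x * lap u x|)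
    · intro n
      exact ((hχcont n).mul (ucont.mul hlapcont)).aestronglyMeasurable
    · exact hlap.abs
    · intro n
      refine Eventually.of_forall fun x => ?_
      rw [Real.norm_eq_abs, abs_mul]
      have h1 : |χ n x| ≤ 1 := by
        rw [abs_of_nonneg (cut_nonneg _ _)]; exact cut_le_one _ _
      nlinarith [abs_nonneg (u x * lap u x), abs_nonneg (χ n x)]
    · refine Eventually.of_forall fun x => ?_
      refine Tendsto.congr' ?_ (tendsto_const_nhds (x := u x * lap u x))
      filter_upwards [hχtend x] with n hn
      rw [hn, one_mul]
  have limB : Tendsto (fun n => ∫ x, χ n x * S x) atTop (nhds (∫ x, S x)) := by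
    apply tendsto_integral_of_dominated_convergence (fun x => S x)
    · intro n
      exact ((hχcont n).mul hScont).aestronglyMeasurable
    · exact hSint
    · intro n
      refine Eventually.of_forall fun x => ?_
      rw [Real.norm_eq_abs, abs_mul, abs_of_nonneg (hSnn x)]
      have h1 : |χ n x| ≤ 1 := by
        rw [abs_of_nonneg (cut_nonneg _ _)]; exact cut_le_one _ _
      nlinarith [hSnn x, abs_nonneg (χ n x)]
    · refine Eventually.of_forall fun x => ?_
      refine Tendsto.congr' ?_ (tendsto_const_nhds (x := S x))
      filter_upwards [hχtend x] with n hn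
      rw [hn, one_mul]
  have limCi : ∀ i, Tendsto (fun n => ∫ x, u x * fderiv ℝ (χ n) x (e i) * D i x) atTop
      (nhds 0) := by
    intro i
    have h0 : (0:ℝ) = ∫ (_ : Euc N), (0:ℝ) := by simp
    rw [h0]
    apply tendsto_integral_of_dominated_convergence (fun x => 4*C*(u x^2 + S x))
    · intro n
      exact ((ucont.mul (hχ'icont n i)).mul (hDicont i)).aestronglyMeasurable
    · exact (hu2.add hSint).const_mul (4*C)
    · intro n
      refine Eventually.of_forall fun x => ?_
      rw [Real.norm_eq_abs, abs_mul, abs_mul]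
      have h1 : |fderiv ℝ (χ n) x (e i)| ≤ 4*C := hχ'ib n i x
      have h2 : (D i x)^2 ≤ S x := by
        rw [hSdef]
        exact Finset.single_le_sum (f := fun j => (D j x)^2)
          (fun j _ => sq_nonneg _) (Finset.mem_univ i)
      nlinarith [sq_nonneg (|u x| - |D i x|), sq_abs (u x), sq_abs (D i x),
        abs_nonneg (u x), abs_nonneg (D i x), abs_nonneg (fderiv ℝ (χ n) x (e i)),
        mul_nonneg (abs_nonneg (u x)) (abs_nonneg (D i x))]
    · refine Eventually.of_forall fun x => ?_
      refine Tendsto.congr' ?_ (tendsto_const_nhds (x := (0:ℝ)))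
      filter_upwards [hχ'tend x] with n hn
      rw [hn]
      simp
  have limC : Tendsto (fun n => ∑ i, ∫ x, u x * fderiv ℝ (χ n) x (e i) * D i x) atTop
      (nhds 0) := by
    have := tendsto_finset_sum Finset.univ (fun i (_ : i ∈ Finset.univ) => limCi i)
    simpa using this
  have tall : Tendsto (fun n => (∫ x, χ n x * (u x * lap u x)) + ((∫ x, χ n x * S x)
      + (∑ i, ∫ x, u x * fderiv ℝ (χ n) x (e i) * D i x))) atTop
      (nhds ((∫ x, u x * lap u x) + ((∫ x, S x) + 0))) := limA.add (limB.add limC)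
  have tzero : Tendsto (fun _ : ℕ => (0:ℝ)) atTop (nhds 0) := tendsto_const_nhds
  have heq0 : (∫ x, u x * lap u x) + ((∫ x, S x) + 0) = 0 := by
    refine tendsto_nhds_unique ?_ tzero
    refine tall.congr ?_
    intro n
    exact main n
  have : ∫ x, S x = ∫ x, ∑ i, (fderiv ℝ u x (EuclideanSpace.single i 1)) ^ 2 := rfl
  linarith [heq0, this.symm.le]

end nehari

lemma grad_apply {N : ℕ} (u : Euc N → ℝ) (x v : Euc N) :
    (inner ℝ (gradient u x) v : ℝ) = fderiv ℝ u x v := by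
  rw [gradient, InnerProductSpace.toDual_symm_apply]

lemma norm_grad_sq {N : ℕ} (u : Euc N → ℝ) (x : Euc N) :
    ‖gradient u x‖ ^ 2 = ∑ i, (fderiv ℝ u x (EuclideanSpace.single i 1)) ^ 2 := by
  have h : ∀ i, fderiv ℝ u x (EuclideanSpace.single i 1) = gradient u x i := by
    intro i
    rw [← grad_apply, EuclideanSpace.inner_single_right]
    simp
  rw [EuclideanSpace.norm_eq]
  rw [Real.sq_sqrt (by positivity)]
  refine Finset.sum_congr rfl fun i _ => ?_
  rw [h i, Real.norm_eq_abs, sq_abs]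



set_option maxHeartbeats 1000000 in
/-- sign of the Lagrange multiplier. -/
theorem statement_2 (N : ℕ) (hN : 2 ≤ N) (m : ℝ) (hm : 0 < m)
    (g : ℝ → ℝ) (α β : ℝ) (hg : SatisfiesG12 N g α β)
    (lam : ℝ) (u : Euc N → ℝ) (humem : memH1 u) (huC2 : ContDiff ℝ 2 u)
    (hune : u ≠ 0) (hmass : (∫ x, (u x) ^ 2) = m)
    (hGint : Integrable (fun x => Gfun g (u x)))
    (heq : ∀ x, - lap u x + lam * u x = g (u x))
    (hPoh : Pfun N g u = 0) :
    lam * m = (∫ x, (-(((N : ℝ) - 2) / 2) * g (u x) * u x + (N : ℝ) * Gfun g (u x))) ∧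
    ((N : ℝ) - (((N : ℝ) - 2) / 2) * β) * (∫ x, Gfun g (u x))
      ≤ (∫ x, (-(((N : ℝ) - 2) / 2) * g (u x) * u x + (N : ℝ) * Gfun g (u x))) ∧
    0 < ((N : ℝ) - (((N : ℝ) - 2) / 2) * β) * (∫ x, Gfun g (u x)) ∧
    0 < lam := by
  obtain ⟨hgc, hα, hαβ, hβlt, hgG⟩ := hg
  obtain ⟨huC1, hu2, hgrad2⟩ := humem
  have hN2 : (2:ℝ) ≤ (N:ℝ) := by exact_mod_cast hN
  have hNpos : (0:ℝ) < (N:ℝ) := by linarith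
  set c1 : ℝ := ((N:ℝ) - 2) / 2 with hc1def
  have hc1 : 0 ≤ c1 := by rw [hc1def]; linarith
  -- G properties
  have hG0 : Gfun g 0 = 0 := intervalIntegral.integral_same
  have hα0 : (0:ℝ) < α := lt_trans (by positivity) hα
  have hβ0 : (0:ℝ) < β := lt_trans hα0 hαβ
  have hGpos : ∀ ξ : ℝ, ξ ≠ 0 → 0 < Gfun g ξ := by
    intro ξ hξ
    have h1 := (hgG ξ hξ).1
    nlinarith
  have hGnn : ∀ ξ : ℝ, 0 ≤ Gfun g ξ := by
    intro ξ
    rcases eq_or_ne ξ 0 with h | h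
    · rw [h, hG0]
    · exact le_of_lt (hGpos ξ h)
  have hgub : ∀ x, g (u x) * u x ≤ β * Gfun g (u x) := by
    intro x
    rcases eq_or_ne (u x) 0 with h | h
    · rw [h, hG0]; simp
    · exact (hgG (u x) h).2.2
  have hglb : ∀ x, 0 ≤ g (u x) * u x := by
    intro x
    rcases eq_or_ne (u x) 0 with h | h
    · rw [h]; simp
    · exact le_trans (le_of_lt (hgG (u x) h).1) (hgG (u x) h).2.1
  -- continuity
  have hucont : Continuous u := huC2.continuous
  have hguucont : Continuous (fun x => g (u x) * u x) := (hgc.comp hucont).mul hucont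
  have hguuint : Integrable (fun x => g (u x) * u x) := by
    refine Integrable.mono (hGint.const_mul β) hguucont.aestronglyMeasurable ?_
    refine Eventually.of_forall fun x => ?_
    rw [Real.norm_eq_abs, Real.norm_eq_abs, abs_of_nonneg (hglb x)]
    exact le_trans (hgub x) (le_abs_self _)
  -- derivative squares
  have hSint : Integrable (fun x => ∑ i, (fderiv ℝ u x (EuclideanSpace.single i 1))^2) :=
    hgrad2.congr (Eventually.of_forall fun x => norm_grad_sq u x)
  -- u * lap u
  have hlapeq : ∀ x, u x * lap u x = lam * u x ^2 - g (u x) * u x := by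
    intro x
    have h : lap u x = lam * u x - g (u x) := by linarith [heq x]
    rw [h]; ring
  have hlapint : Integrable (fun x => u x * lap u x) := by
    refine Integrable.congr ?_ (Eventually.of_forall fun x => (hlapeq x).symm)
    exact (hu2.const_mul lam).sub hguuint
  -- Nehari identity
  have hneh := nehari u huC2 hu2 hSint hlapint
  have h1 : ∫ x, u x * lap u x = lam * (∫ x, u x ^2) - ∫ x, g (u x) * u x := by
    rw [integral_congr_ae (Eventually.of_forall fun x => hlapeq x),
      integral_sub ((hu2.const_mul lam)) hguuint, integral_const_mul]
  have h2 : ∫ x, ∑ i, (fderiv ℝ u x (EuclideanSpace.single i 1))^2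
      = ∫ x, ‖gradient u x‖^2 :=
    integral_congr_ae (Eventually.of_forall fun x => (norm_grad_sq u x).symm)
  set K1 : ℝ := ∫ x, u x ^ 2 with hK1
  set K2 : ℝ := ∫ x, ‖gradient u x‖ ^ 2 with hK2
  set K3 : ℝ := ∫ x, g (u x) * u x with hK3
  set K4 : ℝ := ∫ x, Gfun g (u x) with hK4
  have hNe : K2 + lam * K1 = K3 := by
    rw [h1, h2] at hneh
    linarith
  -- Pohozaev
  have hsplit : ∫ x, ((1/2) * g (u x) * u x - Gfun g (u x)) = (1/2)*K3 - K4 := by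
    have hint : Integrable (fun x => (1/2) * g (u x) * u x) := by
      have := hguuint.const_mul (1/2)
      refine this.congr (Eventually.of_forall fun x => by ring)
    rw [integral_sub hint hGint]
    congr 1
    rw [← integral_const_mul]
    exact integral_congr_ae (Eventually.of_forall fun x => by ring)
  have hP : K2 = (N:ℝ) * ((1/2)*K3 - K4) := by
    have := hPoh
    unfold Pfun at this
    rw [hsplit] at this
    linarith
  -- target integral
  have htarget : ∫ x, (-(c1) * g (u x) * u x + (N:ℝ) * Gfun g (u x))
      = -(c1)*K3 + (N:ℝ)*K4 := by
    have hint : Integrable (fun x => -(c1) * g (u x) * u x) := by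
      have := hguuint.const_mul (-(c1))
      refine this.congr (Eventually.of_forall fun x => by ring)
    rw [integral_add hint (hGint.const_mul (N:ℝ)), integral_const_mul]
    congr 1
    rw [← integral_const_mul]
    exact integral_congr_ae (Eventually.of_forall fun x => by ring)
  -- goal 1
  have goal1 : lam * m = -(c1)*K3 + (N:ℝ)*K4 := by
    rw [← hmass]
    rw [hc1def]
    linear_combination hNe - hP
  -- goal 2
  have hint2 : Integrable (fun x => -(c1) * g (u x) * u x + (N:ℝ) * Gfun g (u x)) := by
    refine Integrable.add ?_ (hGint.const_mul (N:ℝ))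
    have := hguuint.const_mul (-(c1))
    exact this.congr (Eventually.of_forall fun x => by ring)
  have goal2 : ((N:ℝ) - c1 * β) * K4 ≤ -(c1)*K3 + (N:ℝ)*K4 := by
    rw [← htarget, hK4, ← integral_const_mul]
    refine integral_mono (hGint.const_mul _) hint2 ?_
    intro x
    have hb := hgub x
    have hgn := hGnn (u x)
    simp only
    nlinarith
  -- goal 3
  have hcpos : 0 < (N:ℝ) - c1 * β := by
    rcases eq_or_lt_of_le hN with h | h
    · have : (N:ℝ) = 2 := by exact_mod_cast h.symm
      rw [hc1def, this]
      norm_num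
    · have h3 : 3 ≤ N := h
      have hβlt' := hβlt h3
      have hN2' : (0:ℝ) < (N:ℝ) - 2 := by
        have : (3:ℝ) ≤ (N:ℝ) := by exact_mod_cast h3
        linarith
      have key : c1 * (2 * (N:ℝ) / ((N:ℝ) - 2)) = (N:ℝ) := by
        rw [hc1def]
        field_simp
      nlinarith [mul_lt_mul_of_pos_left hβlt' (show (0:ℝ) < c1 by rw [hc1def]; linarith)]
  have hK4pos : 0 < K4 := by
    obtain ⟨x₀, hx₀⟩ := Function.ne_iff.1 hune
    have hGu_cont : Continuous (fun x => Gfun g (u x)) := by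
      have hGc : Continuous (Gfun g) := by
        rw [continuous_iff_continuousAt]
        intro ξ
        exact (intervalIntegral.integral_hasDerivAt_right (hgc.intervalIntegrable 0 ξ)
          hgc.stronglyMeasurable.stronglyMeasurableAtFilter
          hgc.continuousAt).continuousAt
      exact hGc.comp hucont
    rw [hK4, integral_pos_iff_support_of_nonneg (fun x => hGnn (u x)) hGint]
    refine IsOpen.measure_pos volume hGu_cont.isOpen_support ?_
    exact ⟨x₀, ne_of_gt (hGpos (u x₀) hx₀)⟩
  have goal3 : 0 < ((N:ℝ) - c1 * β) * K4 := mul_pos hcpos hK4pos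
  -- goal 4
  have goal4 : 0 < lam := by
    have hA : 0 < lam * m := lt_of_lt_of_le goal3 (goal1 ▸ goal2)
    by_contra hlam
    push_neg at hlam
    nlinarith
  refine ⟨?_, ?_, ?_, goal4⟩
  · rw [htarget]; exact goal1
  · rw [htarget]; exact goal2
  · exact goal3
end
end

section
/- Assume N ≥ 2, m > 0 and that g satisfies (g1)–(g2), and let c > 0. Suppose (u_j) ⊂ S_m satisfies I(u_j) → c and P(u_j) → 0 as j → ∞. Then sup_j ∫_{ℝ^N}|∇u_j|² < ∞, and moreover liminf_j ∫_{ℝ^N} G(u_j) ≥ c / (Nβ/4 − 1 − N/2) > 0 and limsup_j ∫_{ℝ^N} G(u_j) ≤ c / (Nα/4 − 1 − N/2). -/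
open MeasureTheory Filter Set Topology

noncomputable section

/-- boundedness of gradients and bounds on `∫ G(u_j)` along PSP-type sequences. -/
theorem statement_7 (N : ℕ) (hN : 2 ≤ N) (m : ℝ) (hm : 0 < m)
    (g : ℝ → ℝ) (α β : ℝ) (hg : SatisfiesG12 N g α β)
    (c : ℝ) (hc : 0 < c) (u : ℕ → Euc N → ℝ)
    (hmem : ∀ j, memH1 (u j) ∧ (∫ x, (u j x) ^ 2) = m)
    (hI : Tendsto (fun j => Ifun N g (u j)) atTop (𝓝 c))
    (hP : Tendsto (fun j => Pfun N g (u j)) atTop (𝓝 0)) :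
    (∃ C : ℝ, ∀ j, (∫ x, ‖gradient (u j) x‖ ^ 2) ≤ C) ∧
    c / ((N : ℝ) * β / 4 - 1 - (N : ℝ) / 2)
      ≤ Filter.liminf (fun j => ∫ x, Gfun g (u j x)) atTop ∧
    0 < c / ((N : ℝ) * β / 4 - 1 - (N : ℝ) / 2) ∧
    Filter.limsup (fun j => ∫ x, Gfun g (u j x)) atTop
      ≤ c / ((N : ℝ) * α / 4 - 1 - (N : ℝ) / 2) := by
  obtain ⟨hgcont, hα, hαβ, -, hineq⟩ := hg
  have hN2 : (2:ℝ) ≤ (N:ℝ) := by exact_mod_cast hN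
  have hα2 : (2:ℝ) < α := by
    have : 0 < 4 / (N:ℝ) := by positivity
    linarith
  have hβ2 : (2:ℝ) < β := lt_trans hα2 hαβ
  -- continuity of G
  have hGcont : Continuous (Gfun g) :=
    intervalIntegral.continuous_primitive (fun a b => hgcont.intervalIntegrable a b) 0
  have hG0 : Gfun g 0 = 0 := intervalIntegral.integral_same
  -- pointwise inequalities
  have hpt : ∀ ξ : ℝ, 0 ≤ Gfun g ξ ∧
      (α/2 - 1) * Gfun g ξ ≤ (1/2) * g ξ * ξ - Gfun g ξ ∧
      (1/2) * g ξ * ξ - Gfun g ξ ≤ (β/2 - 1) * Gfun g ξ := by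
    intro ξ
    rcases eq_or_ne ξ 0 with rfl | hξ
    · simp [hG0]
    · obtain ⟨h1, h2, h3⟩ := hineq ξ hξ
      have hGpos : 0 < Gfun g ξ := by nlinarith
      refine ⟨hGpos.le, by nlinarith, by nlinarith⟩
  -- notation
  set A : ℕ → ℝ := fun j => ∫ x, ‖gradient (u j) x‖ ^ 2 with hA
  set B : ℕ → ℝ := fun j => ∫ x, Gfun g (u j x) with hB
  set D : ℕ → ℝ := fun j => ∫ x, ((1/2) * g (u j x) * u j x - Gfun g (u j x)) with hD
  -- integral inequalities, case split on integrability
  have hBD : ∀ j, (α/2 - 1) * B j ≤ D j ∧ D j ≤ (β/2 - 1) * B j ∧ 0 ≤ B j := by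
    intro j
    have hucont : Continuous (u j) := (hmem j).1.1.continuous
    have hf1c : Continuous (fun x => Gfun g (u j x)) := hGcont.comp hucont
    have hf2c : Continuous (fun x : Euc N =>
        (1/2) * g (u j x) * u j x - Gfun g (u j x)) := by
      exact (((continuous_const.mul (hgcont.comp hucont)).mul hucont).sub hf1c)
    by_cases hint : Integrable (fun x : Euc N =>
        (1/2) * g (u j x) * u j x - Gfun g (u j x))
    · have hf1int : Integrable (fun x => Gfun g (u j x)) := by
        refine (hint.const_mul ((α/2 - 1)⁻¹)).mono' hf1c.aestronglyMeasurable ?_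
        refine Filter.Eventually.of_forall fun x => ?_
        obtain ⟨h0, h1, _⟩ := hpt (u j x)
        rw [Real.norm_of_nonneg h0]
        rw [le_inv_mul_iff₀ (by linarith : (0:ℝ) < α/2 - 1)]
        linarith
      have hle1 : (α/2 - 1) * B j ≤ D j := by
        have := integral_mono (hf1int.const_mul (α/2 - 1)) hint
          (fun x => (hpt (u j x)).2.1)
        rwa [integral_const_mul] at this
      have hle2 : D j ≤ (β/2 - 1) * B j := by
        have := integral_mono hint (hf1int.const_mul (β/2 - 1))
          (fun x => (hpt (u j x)).2.2)
        rwa [integral_const_mul] at this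
      exact ⟨hle1, hle2, integral_nonneg fun x => (hpt (u j x)).1⟩
    · have hf1nint : ¬ Integrable (fun x => Gfun g (u j x)) := by
        intro hf1int
        apply hint
        refine (hf1int.const_mul (β/2 - 1)).mono' hf2c.aestronglyMeasurable ?_
        refine Filter.Eventually.of_forall fun x => ?_
        obtain ⟨h0, h1, h2⟩ := hpt (u j x)
        rw [Real.norm_of_nonneg (by nlinarith)]
        exact h2
      have hB0 : B j = 0 := integral_undef hf1nint
      have hD0 : D j = 0 := integral_undef hint
      rw [hB0, hD0]
      norm_num
  -- the combined quantity Q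
  set Q : ℕ → ℝ := fun j => Ifun N g (u j) - Pfun N g (u j) / 2 with hQdef
  have hQ : Tendsto Q atTop (𝓝 c) := by
    have := hI.sub (hP.div_const 2)
    simpa using this
  have hQeq : ∀ j, Q j = (N:ℝ)/2 * D j - B j := by
    intro j
    simp only [hQdef, Ifun, Pfun, ← hA, ← hB, ← hD]
    ring
  set κa : ℝ := (N:ℝ) * α / 4 - 1 - (N:ℝ) / 2 with hκa
  set κb : ℝ := (N:ℝ) * β / 4 - 1 - (N:ℝ) / 2 with hκb
  have hκapos : 0 < κa := by
    have h4N : 4 / (N:ℝ) * (N:ℝ) = 4 := by field_simp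
    rw [hκa]; nlinarith
  have hκbpos : 0 < κb := by
    rw [hκb]; rw [hκa] at hκapos; nlinarith
  have hQlb : ∀ j, κa * B j ≤ Q j := by
    intro j
    obtain ⟨h1, _, h3⟩ := hBD j
    rw [hQeq j]
    nlinarith [mul_le_mul_of_nonneg_left h1 (by linarith : (0:ℝ) ≤ (N:ℝ)/2)]
  have hQub : ∀ j, Q j ≤ κb * B j := by
    intro j
    obtain ⟨_, h2, h3⟩ := hBD j
    rw [hQeq j]
    nlinarith [mul_le_mul_of_nonneg_left h2 (by linarith : (0:ℝ) ≤ (N:ℝ)/2)]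
  have hBub : ∀ j, B j ≤ Q j / κa := fun j => (le_div_iff₀' hκapos).2 (hQlb j)
  have hBlb : ∀ j, Q j / κb ≤ B j := fun j => (div_le_iff₀' hκbpos).2 (hQub j)
  have hQa : Tendsto (fun j => Q j / κa) atTop (𝓝 (c / κa)) := hQ.div_const κa
  have hQb : Tendsto (fun j => Q j / κb) atTop (𝓝 (c / κb)) := hQ.div_const κb
  refine ⟨?_, ?_, ?_, ?_⟩
  · -- boundedness of A
    obtain ⟨MQ, hMQ⟩ := hQa.bddAbove_range
    obtain ⟨MI, hMI⟩ := hI.bddAbove_range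
    refine ⟨2 * MI + 2 * MQ, fun j => ?_⟩
    have hAj : A j = 2 * Ifun N g (u j) + 2 * B j := by
      simp only [Ifun, ← hA, ← hB]; ring
    have h1 : Ifun N g (u j) ≤ MI := hMI ⟨j, rfl⟩
    have h2 : B j ≤ MQ := le_trans (hBub j) (hMQ ⟨j, rfl⟩)
    show A j ≤ 2 * MI + 2 * MQ
    rw [hAj]; linarith
  · -- liminf bound
    have h1 : liminf (fun j => Q j / κb) atTop = c / κb := hQb.liminf_eq
    calc c / κb = liminf (fun j => Q j / κb) atTop := h1.symm
      _ ≤ liminf B atTop := by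
          refine liminf_le_liminf (Filter.Eventually.of_forall hBlb)
            hQb.isBoundedUnder_ge ?_
          exact (hQa.isBoundedUnder_le.mono_le
            (Filter.Eventually.of_forall hBub)).isCoboundedUnder_ge
  · exact div_pos hc hκbpos
  · have h1 : limsup (fun j => Q j / κa) atTop = c / κa := hQa.limsup_eq
    calc limsup B atTop ≤ limsup (fun j => Q j / κa) atTop := by
          refine limsup_le_limsup (Filter.Eventually.of_forall hBub) ?_
            hQa.isBoundedUnder_le
          exact isCoboundedUnder_le_of_eventually_le atTop
            (Filter.Eventually.of_forall fun j => (hBD j).2.2)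
      _ = c / κa := h1
end
end

section
/- Assume N ≥ 2, m > 0 and that g satisfies (g1)–(g3). Then for every u ∈ S_m with P(u) = 0, the scaling map t ↦ I(u_t) attains its global maximum over (0,∞) at t = 1; that is, I(u_t) ≤ I(u) for all t > 0, where u_t(x) = t^{N/2}u(tx). -/
open MeasureTheory Filter Set Topology

noncomputable section

/-- Condition (g3): `Ĝ(ξ) = (1/2)g(ξ)ξ − G(ξ)` is `C¹` and `Ĝ'(ξ)ξ > (2 + 4/N)Ĝ(ξ)` for ξ ≠ 0. -/
def SatisfiesG3 (N : ℕ) (g : ℝ → ℝ) : Prop :=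
  ContDiff ℝ 1 (fun ξ : ℝ => (1/2) * g ξ * ξ - Gfun g ξ) ∧
  ∀ ξ : ℝ, ξ ≠ 0 →
    (2 + 4 / (N : ℝ)) * ((1/2) * g ξ * ξ - Gfun g ξ)
      < deriv (fun ξ : ℝ => (1/2) * g ξ * ξ - Gfun g ξ) ξ * ξ

namespace St9Aux

variable {g : ℝ → ℝ}

lemma gfun_hasDerivAt (hg : Continuous g) (y : ℝ) : HasDerivAt (Gfun g) (g y) y :=
  intervalIntegral.integral_hasDerivAt_right (hg.intervalIntegrable _ _)
    (hg.stronglyMeasurableAtFilter _ _) hg.continuousAt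

lemma Gfun_zero (g : ℝ → ℝ) : Gfun g 0 = 0 := intervalIntegral.integral_same

lemma Gfun_continuous (hg : Continuous g) : Continuous (Gfun g) :=
  (Differentiable.continuous fun y => (gfun_hasDerivAt hg y).differentiableAt)

lemma Gfun_comp_hasDerivAt (hg : Continuous g) (ξ s : ℝ) :
    HasDerivAt (fun s : ℝ => Gfun g (s * ξ)) (g (s * ξ) * ξ) s := by
  exact (gfun_hasDerivAt hg (s * ξ)).comp s (hasDerivAt_mul_const ξ)

lemma Gfun_scale_upper (hgc : Continuous g) {β : ℝ}
    (hub : ∀ ζ : ℝ, ζ ≠ 0 → g ζ * ζ ≤ β * Gfun g ζ) {ξ : ℝ} (hξ : ξ ≠ 0)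
    {c : ℝ} (hc : 1 ≤ c) : Gfun g (c * ξ) ≤ c ^ β * Gfun g ξ := by
  set F : ℝ → ℝ := fun s => s ^ (-β) * Gfun g (s * ξ) with hF
  have hD : ∀ s : ℝ, 0 < s →
      HasDerivAt F (-β * s ^ (-β - 1) * Gfun g (s * ξ) + s ^ (-β) * (g (s * ξ) * ξ)) s := by
    intro s hs
    exact (Real.hasDerivAt_rpow_const (Or.inl hs.ne')).mul (Gfun_comp_hasDerivAt hgc ξ s)
  have hanti : AntitoneOn F (Icc 1 c) := by
    apply antitoneOn_of_deriv_nonpos (convex_Icc 1 c)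
    · intro s hs
      have hs0 : (0:ℝ) < s := lt_of_lt_of_le one_pos hs.1
      exact ((hD s hs0).differentiableAt.continuousAt).continuousWithinAt
    · intro s hs
      rw [interior_Icc] at hs
      exact ((hD s (lt_trans one_pos hs.1)).differentiableAt).differentiableWithinAt
    · intro s hs
      rw [interior_Icc] at hs
      have hs0 : (0:ℝ) < s := lt_trans one_pos hs.1
      rw [(hD s hs0).deriv]
      have hsξ : s * ξ ≠ 0 := mul_ne_zero hs0.ne' hξ
      have key := hub _ hsξ
      have e1 : s ^ (-β) * (g (s*ξ) * ξ) = s ^ (-β-1) * (g (s*ξ) * (s*ξ)) := by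
        rw [show (-β : ℝ) = (-β - 1) + 1 by ring, Real.rpow_add hs0, Real.rpow_one]; ring
      rw [e1]
      have hp : (0:ℝ) < s ^ (-β-1) := Real.rpow_pos_of_pos hs0 _
      nlinarith [mul_le_mul_of_nonneg_left key hp.le]
  have hFc : F c ≤ F 1 := hanti (left_mem_Icc.2 hc) (right_mem_Icc.2 hc) hc
  have h1F : F 1 = Gfun g ξ := by simp [hF]
  have hc0 : (0:ℝ) < c := lt_of_lt_of_le one_pos hc
  have hpow : (0:ℝ) < c ^ β := Real.rpow_pos_of_pos hc0 β
  have hthis : (c ^ β)⁻¹ * Gfun g (c * ξ) ≤ Gfun g ξ := by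
    have := hFc; rw [h1F] at this
    simpa only [hF, Real.rpow_neg hc0.le] using this
  calc Gfun g (c*ξ) = c ^ β * ((c ^ β)⁻¹ * Gfun g (c*ξ)) := by field_simp
    _ ≤ c ^ β * Gfun g ξ := mul_le_mul_of_nonneg_left hthis hpow.le

lemma Gfun_scale_lower (hgc : Continuous g) {α : ℝ}
    (hlb : ∀ ζ : ℝ, ζ ≠ 0 → α * Gfun g ζ ≤ g ζ * ζ) {ξ : ℝ} (hξ : ξ ≠ 0)
    {c : ℝ} (hc0 : 0 < c) (hc1 : c ≤ 1) : Gfun g (c * ξ) ≤ c ^ α * Gfun g ξ := by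
  set F : ℝ → ℝ := fun s => s ^ (-α) * Gfun g (s * ξ) with hF
  have hD : ∀ s : ℝ, 0 < s →
      HasDerivAt F (-α * s ^ (-α - 1) * Gfun g (s * ξ) + s ^ (-α) * (g (s * ξ) * ξ)) s := by
    intro s hs
    exact (Real.hasDerivAt_rpow_const (Or.inl hs.ne')).mul (Gfun_comp_hasDerivAt hgc ξ s)
  have hmono : MonotoneOn F (Icc c 1) := by
    apply monotoneOn_of_deriv_nonneg (convex_Icc c 1)
    · intro s hs
      have hs0 : (0:ℝ) < s := lt_of_lt_of_le hc0 hs.1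
      exact ((hD s hs0).differentiableAt.continuousAt).continuousWithinAt
    · intro s hs
      rw [interior_Icc] at hs
      exact ((hD s (lt_trans hc0 hs.1)).differentiableAt).differentiableWithinAt
    · intro s hs
      rw [interior_Icc] at hs
      have hs0 : (0:ℝ) < s := lt_trans hc0 hs.1
      rw [(hD s hs0).deriv]
      have hsξ : s * ξ ≠ 0 := mul_ne_zero hs0.ne' hξ
      have key := hlb _ hsξ
      have e1 : s ^ (-α) * (g (s*ξ) * ξ) = s ^ (-α-1) * (g (s*ξ) * (s*ξ)) := by
        rw [show (-α : ℝ) = (-α - 1) + 1 by ring, Real.rpow_add hs0, Real.rpow_one]; ring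
      rw [e1]
      have hp : (0:ℝ) < s ^ (-α-1) := Real.rpow_pos_of_pos hs0 _
      nlinarith [mul_le_mul_of_nonneg_left key hp.le]
  have hFc : F c ≤ F 1 := hmono (left_mem_Icc.2 hc1) (right_mem_Icc.2 hc1) hc1
  have h1F : F 1 = Gfun g ξ := by simp [hF]
  have hpow : (0:ℝ) < c ^ α := Real.rpow_pos_of_pos hc0 α
  have hthis : (c ^ α)⁻¹ * Gfun g (c * ξ) ≤ Gfun g ξ := by
    have := hFc; rw [h1F] at this
    simpa only [hF, Real.rpow_neg hc0.le] using this
  calc Gfun g (c*ξ) = c ^ α * ((c ^ α)⁻¹ * Gfun g (c*ξ)) := by field_simp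
    _ ≤ c ^ α * Gfun g ξ := mul_le_mul_of_nonneg_left hthis hpow.le



/-- `Ĝ`. -/
def Gh (g : ℝ → ℝ) (ξ : ℝ) : ℝ := (1/2) * g ξ * ξ - Gfun g ξ

lemma Gh_def (g : ℝ → ℝ) : (fun ξ : ℝ => (1/2) * g ξ * ξ - Gfun g ξ) = Gh g := rfl

variable {N : ℕ} {g : ℝ → ℝ} {α β : ℝ}

lemma Gfun_zero' (g : ℝ → ℝ) : Gfun g 0 = 0 := intervalIntegral.integral_same

lemma alpha_gt_two (hg : SatisfiesG12 N g α β) : 2 < α := by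
  have h4 : (0:ℝ) ≤ 4 / (N : ℝ) := by positivity
  linarith [hg.2.1]

lemma beta_gt_two (hg : SatisfiesG12 N g α β) : 2 < β :=
  lt_trans (alpha_gt_two hg) hg.2.2.1

lemma Gfun_pos (hg : SatisfiesG12 N g α β) {ξ : ℝ} (hξ : ξ ≠ 0) : 0 < Gfun g ξ := by
  have h := (hg.2.2.2.2 ξ hξ).1
  have hα : 0 < α := lt_trans two_pos (alpha_gt_two hg)
  nlinarith [h, hα]

lemma Gfun_nonneg (hg : SatisfiesG12 N g α β) (ξ : ℝ) : 0 ≤ Gfun g ξ := by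
  rcases eq_or_ne ξ 0 with rfl | hξ
  · rw [Gfun_zero']
  · exact (Gfun_pos hg hξ).le

lemma Gh_zero (g : ℝ → ℝ) : Gh g 0 = 0 := by simp [Gh, Gfun_zero']

lemma Gh_le (hg : SatisfiesG12 N g α β) (ξ : ℝ) : Gh g ξ ≤ (β/2 - 1) * Gfun g ξ := by
  rcases eq_or_ne ξ 0 with rfl | hξ
  · rw [Gh_zero, Gfun_zero']; simp
  · have h := (hg.2.2.2.2 ξ hξ).2.2
    unfold Gh; linarith

lemma Gh_ge (hg : SatisfiesG12 N g α β) (ξ : ℝ) : (α/2 - 1) * Gfun g ξ ≤ Gh g ξ := by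
  rcases eq_or_ne ξ 0 with rfl | hξ
  · rw [Gh_zero, Gfun_zero']; simp
  · have h := (hg.2.2.2.2 ξ hξ).2.1
    unfold Gh; linarith

lemma Gh_nonneg (hg : SatisfiesG12 N g α β) (ξ : ℝ) : 0 ≤ Gh g ξ := by
  have h := Gh_ge hg ξ
  have h2 : 0 < α/2 - 1 := by linarith [alpha_gt_two hg]
  nlinarith [Gfun_nonneg hg ξ]

lemma gfun_hasDerivAt' (hg : Continuous g) (y : ℝ) : HasDerivAt (Gfun g) (g y) y :=
  intervalIntegral.integral_hasDerivAt_right (hg.intervalIntegrable _ _)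
    (hg.stronglyMeasurableAtFilter _ _) hg.continuousAt

lemma Gfun_comp_hasDerivAt' (hg : Continuous g) (ξ s : ℝ) :
    HasDerivAt (fun s : ℝ => Gfun g (s * ξ)) (g (s * ξ) * ξ) s := by
  exact (gfun_hasDerivAt' hg (s * ξ)).comp s (hasDerivAt_mul_const ξ)

/-- The key pointwise inequality. -/
lemma key_ineq (N : ℕ) (hN : 2 ≤ N) {g : ℝ → ℝ} {α β : ℝ}
    (hg : SatisfiesG12 N g α β) (hg3 : SatisfiesG3 N g) (ξ : ℝ) {t : ℝ} (ht : 0 < t) :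
    0 ≤ ((N:ℝ) * (1 - t^2) / 2) * Gh g (ξ)
        + ((t^N : ℝ))⁻¹ * Gfun g (t ^ ((N:ℝ)/2) * ξ) - Gfun g ξ := by
  have hgc : Continuous g := hg.1
  have hNR : (0:ℝ) < (N:ℝ) := by exact_mod_cast (by omega : 0 < N)
  set s : ℝ := t ^ ((N:ℝ)/2) with hs_def
  have hs : 0 < s := Real.rpow_pos_of_pos ht _
  have hs2 : s ^ (-(2:ℝ)) = ((t^N : ℝ))⁻¹ := by
    rw [hs_def, ← Real.rpow_mul ht.le]
    rw [show ((N:ℝ)/2) * (-2) = -(N:ℝ) by ring]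
    rw [Real.rpow_neg ht.le, Real.rpow_natCast]
  have hs4 : s ^ ((4:ℝ)/(N:ℝ)) = t ^ 2 := by
    rw [hs_def, ← Real.rpow_mul ht.le]
    rw [show ((N:ℝ)/2) * ((4:ℝ)/(N:ℝ)) = 2 by have := hNR.ne'; field_simp; ring]
    rw [show (2:ℝ) = ((2:ℕ):ℝ) by norm_num, Real.rpow_natCast]
  rcases eq_or_ne ξ 0 with rfl | hξ
  · simp [Gh_zero, Gfun_zero', mul_zero]
  have hGhC : ContDiff ℝ 1 (Gh g) := by rw [← Gh_def]; exact hg3.1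
  have hGhdiff : ∀ y : ℝ, HasDerivAt (Gh g) (deriv (Gh g) y) y := fun y =>
    ((hGhC.differentiable one_ne_zero) y).hasDerivAt
  have hg3' : ∀ ζ : ℝ, ζ ≠ 0 → (2 + 4/(N:ℝ)) * Gh g ζ < deriv (Gh g) ζ * ζ := by
    intro ζ hζ; have h2 := hg3.2 ζ hζ; rwa [Gh_def] at h2
  set cN : ℝ := 2 + 4/(N:ℝ) with hcN
  set ψ : ℝ → ℝ := fun τ => τ ^ (-cN) * Gh g (τ * ξ) with hψdef
  have hψD : ∀ τ : ℝ, 0 < τ →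
      HasDerivAt ψ (-cN * τ ^ (-cN - 1) * Gh g (τ * ξ)
        + τ ^ (-cN) * (deriv (Gh g) (τ * ξ) * ξ)) τ := by
    intro τ hτ
    have h2 : HasDerivAt (fun τ : ℝ => Gh g (τ * ξ)) (deriv (Gh g) (τ * ξ) * ξ) τ := by
      exact (hGhdiff (τ * ξ)).comp τ (hasDerivAt_mul_const ξ)
    exact (Real.hasDerivAt_rpow_const (Or.inl hτ.ne')).mul h2
  have hψmono : StrictMonoOn ψ (Ioi (0:ℝ)) := by
    apply strictMonoOn_of_deriv_pos (convex_Ioi 0)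
    · intro τ hτ; exact ((hψD τ hτ).differentiableAt.continuousAt).continuousWithinAt
    · intro τ hτ
      rw [interior_Ioi] at hτ
      rw [(hψD τ hτ).deriv]
      have hτξ : τ * ξ ≠ 0 := mul_ne_zero hτ.ne' hξ
      have key := hg3' _ hτξ
      have e1 : τ ^ (-cN) * (deriv (Gh g) (τ*ξ) * ξ)
          = τ ^ (-cN-1) * (deriv (Gh g) (τ*ξ) * (τ*ξ)) := by
        rw [show (-cN : ℝ) = (-cN - 1) + 1 by ring, Real.rpow_add hτ, Real.rpow_one]; ring
      rw [e1]
      have hp : (0:ℝ) < τ ^ (-cN-1) := Real.rpow_pos_of_pos hτ _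
      nlinarith [mul_lt_mul_of_pos_left key hp]
  have hψ1 : ψ 1 = Gh g ξ := by simp [hψdef]
  set h : ℝ → ℝ := fun τ => τ ^ (-(2:ℝ)) * Gfun g (τ * ξ)
      - ((N:ℝ)/2) * Gh g ξ * τ ^ ((4:ℝ)/(N:ℝ)) with hhdef
  have hhD : ∀ τ : ℝ, 0 < τ →
      HasDerivAt h ((-(2:ℝ)) * τ ^ (-(2:ℝ) - 1) * Gfun g (τ * ξ)
          + τ ^ (-(2:ℝ)) * (g (τ * ξ) * ξ)
        - ((N:ℝ)/2) * Gh g ξ * ((4:ℝ)/(N:ℝ) * τ ^ ((4:ℝ)/(N:ℝ) - 1))) τ := by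
    intro τ hτ
    exact ((Real.hasDerivAt_rpow_const (Or.inl hτ.ne')).mul
        (Gfun_comp_hasDerivAt' hgc ξ τ)).sub
      ((Real.hasDerivAt_rpow_const (Or.inl hτ.ne')).const_mul (((N:ℝ)/2) * Gh g ξ))
  have hhderiv : ∀ τ : ℝ, 0 < τ →
      deriv h τ = 2 * τ ^ ((4:ℝ)/(N:ℝ) - 1) * (ψ τ - Gh g ξ) := by
    intro τ hτ
    rw [(hhD τ hτ).deriv]
    have e1 : τ ^ (-(2:ℝ)) * (g (τ*ξ) * ξ) = τ ^ (-(2:ℝ)-1) * (g (τ*ξ) * (τ*ξ)) := by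
      rw [show (-(2:ℝ)) = (-(2:ℝ) - 1) + 1 by ring, Real.rpow_add hτ, Real.rpow_one]; ring
    have e2 : τ ^ (-(2:ℝ)-1) = τ ^ ((4:ℝ)/(N:ℝ) - 1) * τ ^ (-cN) := by
      rw [← Real.rpow_add hτ]; congr 1; rw [hcN]; ring
    have e3 : ((N:ℝ)/2) * Gh g ξ * ((4:ℝ)/(N:ℝ) * τ ^ ((4:ℝ)/(N:ℝ) - 1))
        = 2 * Gh g ξ * τ ^ ((4:ℝ)/(N:ℝ) - 1) := by
      have hNe := hNR.ne'; field_simp; ring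
    rw [e1, e2, e3]
    simp only [hψdef, Gh]
    ring
  have hmain : h 1 ≤ h s := by
    rcases le_or_gt s 1 with hs1 | hs1
    · have hanti : AntitoneOn h (Icc s 1) := by
        apply antitoneOn_of_deriv_nonpos (convex_Icc s 1)
        · intro τ hτ
          exact ((hhD τ (lt_of_lt_of_le hs hτ.1)).differentiableAt.continuousAt).continuousWithinAt
        · intro τ hτ; rw [interior_Icc] at hτ
          exact ((hhD τ (lt_trans hs hτ.1)).differentiableAt).differentiableWithinAt
        · intro τ hτ; rw [interior_Icc] at hτ
          have hτ0 : 0 < τ := lt_trans hs hτ.1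
          rw [hhderiv τ hτ0]
          have hlt : ψ τ < Gh g ξ := by
            have h5 := hψmono (mem_Ioi.2 hτ0) (mem_Ioi.2 one_pos) hτ.2
            rwa [hψ1] at h5
          have hp : (0:ℝ) < τ ^ ((4:ℝ)/(N:ℝ) - 1) := Real.rpow_pos_of_pos hτ0 _
          nlinarith
      exact hanti (left_mem_Icc.2 hs1) (right_mem_Icc.2 hs1) hs1
    · have hmono : MonotoneOn h (Icc 1 s) := by
        apply monotoneOn_of_deriv_nonneg (convex_Icc 1 s)
        · intro τ hτ
          exact ((hhD τ (lt_of_lt_of_le one_pos hτ.1)).differentiableAt.continuousAt).continuousWithinAt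
        · intro τ hτ; rw [interior_Icc] at hτ
          exact ((hhD τ (lt_trans one_pos hτ.1)).differentiableAt).differentiableWithinAt
        · intro τ hτ; rw [interior_Icc] at hτ
          have hτ0 : 0 < τ := lt_trans one_pos hτ.1
          rw [hhderiv τ hτ0]
          have hlt : Gh g ξ < ψ τ := by
            have h5 := hψmono (mem_Ioi.2 one_pos) (mem_Ioi.2 hτ0) hτ.1
            rwa [hψ1] at h5
          have hp : (0:ℝ) < τ ^ ((4:ℝ)/(N:ℝ) - 1) := Real.rpow_pos_of_pos hτ0 _
          nlinarith
      exact hmono (left_mem_Icc.2 hs1.le) (right_mem_Icc.2 hs1.le) hs1.le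
  have h1v : h 1 = Gfun g ξ - (N:ℝ)/2 * Gh g ξ := by
    simp [hhdef]
  have hsv : h s = ((t^N:ℝ))⁻¹ * Gfun g (s * ξ) - (N:ℝ)/2 * Gh g ξ * t^2 := by
    simp only [hhdef]; rw [hs2, hs4]
  rw [h1v, hsv] at hmain
  nlinarith [hmain]

end St9Aux

/-- under (g1)–(g3), `t ↦ I(u_t)` attains its global maximum at `t = 1`
for `u` on the Pohozaev manifold. -/
theorem statement_9 (N : ℕ) (hN : 2 ≤ N) (m : ℝ) (hm : 0 < m)
    (g : ℝ → ℝ) (α β : ℝ) (hg : SatisfiesG12 N g α β) (hg3 : SatisfiesG3 N g)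
    (u : Euc N → ℝ) (humem : memH1 u) (hmass : (∫ x, (u x) ^ 2) = m)
    (hPoh : Pfun N g u = 0) :
    ∀ t : ℝ, 0 < t → Ifun N g (scaled u t) ≤ Ifun N g u := by
  intro t ht
  have hu1 : ContDiff ℝ 1 u := humem.1
  have hgc : Continuous g := hg.1
  have hNR : (0:ℝ) < (N:ℝ) := by exact_mod_cast (by omega : 0 < N)
  set c : ℝ := t ^ ((N:ℝ)/2) with hc_def
  have hc : 0 < c := Real.rpow_pos_of_pos ht _
  have htN : (0:ℝ) < t^N := pow_pos ht N
  -- norm of gradient equals norm of fderiv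
  have hgradnorm : ∀ (f : Euc N → ℝ) (x : Euc N), ‖gradient f x‖ = ‖fderiv ℝ f x‖ := by
    intro f x
    unfold gradient
    exact LinearIsometryEquiv.norm_map _ _
  -- fderiv of the scaled function
  have hfd : ∀ x : Euc N, fderiv ℝ (scaled u t) x = (c * t) • fderiv ℝ u (t • x) := by
    intro x
    have hA : HasFDerivAt (fun y : Euc N => t • y)
        (t • ContinuousLinearMap.id ℝ (Euc N)) x := by
      exact (hasFDerivAt_id x).const_smul t
    have hB : HasFDerivAt u (fderiv ℝ u (t • x)) (t • x) :=
      ((hu1.differentiable one_ne_zero) (t • x)).hasFDerivAt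
    have hC := (hB.comp x hA).const_mul c
    have hfd2 : fderiv ℝ (scaled u t) x
        = c • ((fderiv ℝ u (t • x)).comp (t • ContinuousLinearMap.id ℝ (Euc N))) := hC.fderiv
    rw [hfd2]
    ext y
    simp only [ContinuousLinearMap.smul_apply, ContinuousLinearMap.comp_apply,
      ContinuousLinearMap.coe_smul', Pi.smul_apply, ContinuousLinearMap.coe_id', id_eq,
      ContinuousLinearMap.map_smul, smul_eq_mul]
    ring
  have hnormsq : ∀ x : Euc N, ‖gradient (scaled u t) x‖^2
      = (fun y => (c*t)^2 * ‖gradient u y‖^2) (t • x) := by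
    intro x
    simp only
    rw [hgradnorm, hgradnorm, hfd x, norm_smul]
    simp [Real.norm_eq_abs, mul_pow, sq_abs]
  have hc2 : c^2 = t^N := by
    rw [hc_def, ← Real.rpow_natCast (t ^ ((N:ℝ)/2)) 2, ← Real.rpow_mul ht.le,
      show ((N:ℝ)/2) * ((2:ℕ):ℝ) = ((N:ℕ):ℝ) by push_cast; ring, Real.rpow_natCast]
  have hInt1 : (∫ x, ‖gradient (scaled u t) x‖^2) = t^2 * ∫ x, ‖gradient u x‖^2 := by
    calc (∫ x, ‖gradient (scaled u t) x‖^2)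
        = ∫ x : Euc N, (fun y => (c*t)^2 * ‖gradient u y‖^2) (t • x) :=
          integral_congr_ae (Filter.Eventually.of_forall hnormsq)
      _ = |((t:ℝ) ^ (Module.finrank ℝ (Euc N)))⁻¹| • ∫ y, (c*t)^2 * ‖gradient u y‖^2 :=
          Measure.integral_comp_smul volume (fun y => (c*t)^2 * ‖gradient u y‖^2) t
      _ = (t^N : ℝ)⁻¹ * ((c*t)^2 * ∫ y, ‖gradient u y‖^2) := by
          rw [finrank_euclideanSpace_fin, abs_of_pos (inv_pos.2 htN), smul_eq_mul,
            integral_const_mul]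
      _ = t^2 * ∫ x, ‖gradient u x‖^2 := by
          rw [mul_pow, hc2]; field_simp
  have hGint : (∫ x, Gfun g (scaled u t x)) = (t^N : ℝ)⁻¹ * ∫ x, Gfun g (c * u x) := by
    calc (∫ x, Gfun g (scaled u t x))
        = ∫ x : Euc N, (fun y => Gfun g (c * u y)) (t • x) := rfl
      _ = |((t:ℝ) ^ (Module.finrank ℝ (Euc N)))⁻¹| • ∫ y, Gfun g (c * u y) :=
          Measure.integral_comp_smul volume (fun y => Gfun g (c * u y)) t
      _ = (t^N : ℝ)⁻¹ * ∫ x, Gfun g (c * u x) := by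
          rw [finrank_euclideanSpace_fin, abs_of_pos (inv_pos.2 htN), smul_eq_mul]
  have hcontu : Continuous u := hu1.continuous
  have hGcont : Continuous (Gfun g) := St9Aux.Gfun_continuous hgc
  have hGhcont : Continuous (St9Aux.Gh g) := by
    rw [← St9Aux.Gh_def]; exact hg3.1.continuous
  have hα2 : 2 < α := St9Aux.alpha_gt_two hg
  have hβ2 : 2 < β := St9Aux.beta_gt_two hg
  -- scaling comparison for G
  have hGscale : ∀ (ξ : ℝ) (d : ℝ), 0 < d →
      Gfun g (d * ξ) ≤ max (d ^ α) (d ^ β) * Gfun g ξ := by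
    intro ξ d hd
    rcases eq_or_ne ξ 0 with rfl | hξ
    · rw [mul_zero, St9Aux.Gfun_zero', mul_zero]
    · rcases le_or_gt 1 d with hd1 | hd1
      · refine le_trans (St9Aux.Gfun_scale_upper hgc (fun ζ hζ => (hg.2.2.2.2 ζ hζ).2.2) hξ hd1) ?_
        exact mul_le_mul_of_nonneg_right (le_max_right _ _) (St9Aux.Gfun_nonneg hg ξ)
      · refine le_trans (St9Aux.Gfun_scale_lower hgc (fun ζ hζ => (hg.2.2.2.2 ζ hζ).2.1) hξ hd hd1.le) ?_
        exact mul_le_mul_of_nonneg_right (le_max_left _ _) (St9Aux.Gfun_nonneg hg ξ)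
  by_cases hint : Integrable (fun x => Gfun g (u x)) volume
  · -- integrable case
    have hGhu_int : Integrable (fun x => St9Aux.Gh g (u x)) volume := by
      refine Integrable.mono (hint.const_mul (β/2 - 1))
        ((hGhcont.comp hcontu).aestronglyMeasurable) ?_
      filter_upwards with x
      rw [Real.norm_eq_abs, Real.norm_eq_abs, abs_of_nonneg (St9Aux.Gh_nonneg hg (u x)),
        abs_of_nonneg (by nlinarith [St9Aux.Gfun_nonneg hg (u x)] : (0:ℝ) ≤ (β/2-1) * Gfun g (u x))]
      exact St9Aux.Gh_le hg (u x)
    have hGcu_int : Integrable (fun x => Gfun g (c * u x)) volume := by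
      refine Integrable.mono (hint.const_mul (max (c ^ α) (c ^ β)))
        ((hGcont.comp (continuous_const.mul hcontu)).aestronglyMeasurable) ?_
      filter_upwards with x
      have hmaxpos : (0:ℝ) < max (c ^ α) (c ^ β) :=
        lt_max_of_lt_left (Real.rpow_pos_of_pos hc α)
      rw [Real.norm_eq_abs, Real.norm_eq_abs, abs_of_nonneg (St9Aux.Gfun_nonneg hg _),
        abs_of_nonneg (mul_nonneg hmaxpos.le (St9Aux.Gfun_nonneg hg _))]
      exact hGscale (u x) c hc
    have hint_eq : (∫ x, ((1/2) * g (u x) * u x - Gfun g (u x)))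
        = ∫ x, St9Aux.Gh g (u x) := rfl
    have hA_eq : (∫ x, ‖gradient u x‖^2) = (N:ℝ) * ∫ x, St9Aux.Gh g (u x) := by
      have hp := hPoh
      unfold Pfun at hp
      rw [hint_eq] at hp
      linarith
    have hK0 : 0 ≤ ∫ x, (((N:ℝ) * (1 - t^2) / 2) * St9Aux.Gh g (u x)
        + ((t^N : ℝ))⁻¹ * Gfun g (c * u x) - Gfun g (u x)) :=
      integral_nonneg fun x => St9Aux.key_ineq N hN hg hg3 (u x) ht
    have hKsplit : (∫ x, (((N:ℝ) * (1 - t^2) / 2) * St9Aux.Gh g (u x)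
          + ((t^N : ℝ))⁻¹ * Gfun g (c * u x) - Gfun g (u x)))
        = ((N:ℝ) * (1 - t^2) / 2) * (∫ x, St9Aux.Gh g (u x))
          + ((t^N : ℝ))⁻¹ * (∫ x, Gfun g (c * u x)) - ∫ x, Gfun g (u x) := by
      have hintAB : Integrable (fun x => ((N:ℝ) * (1 - t^2) / 2) * St9Aux.Gh g (u x)
          + ((t^N : ℝ))⁻¹ * Gfun g (c * u x)) volume :=
        (hGhu_int.const_mul _).add (hGcu_int.const_mul _)
      rw [integral_sub hintAB hint, integral_add (hGhu_int.const_mul _) (hGcu_int.const_mul _),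
        integral_const_mul, integral_const_mul]
    rw [hKsplit] at hK0
    unfold Ifun
    rw [hInt1, hGint, hA_eq]
    have hring : ((N:ℝ) * (1 - t^2) / 2) * (∫ x, St9Aux.Gh g (u x))
        = 1/2*((N:ℝ) * ∫ x, St9Aux.Gh g (u x))
          - 1/2*(t^2*((N:ℝ) * ∫ x, St9Aux.Gh g (u x))) := by ring
    linarith only [hK0, hring]
  · -- non-integrable case
    have hGu0 : (∫ x, Gfun g (u x)) = 0 := integral_undef hint
    have hGhu_nonint : ¬ Integrable (fun x => St9Aux.Gh g (u x)) volume := by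
      intro hcon
      apply hint
      have hpos : (0:ℝ) < α/2 - 1 := by linarith
      refine Integrable.mono (hcon.const_mul ((α/2 - 1)⁻¹))
        ((hGcont.comp hcontu).aestronglyMeasurable) ?_
      filter_upwards with x
      have hge := St9Aux.Gh_ge hg (u x)
      have hGhnn := St9Aux.Gh_nonneg hg (u x)
      rw [Real.norm_eq_abs, Real.norm_eq_abs, abs_of_nonneg (St9Aux.Gfun_nonneg hg _),
        abs_of_nonneg (mul_nonneg (inv_nonneg.2 hpos.le) hGhnn)]
      have h7 := mul_le_mul_of_nonneg_left hge (inv_nonneg.2 hpos.le)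
      rwa [inv_mul_cancel_left₀ hpos.ne'] at h7
    have hGh0 : (∫ x, ((1/2) * g (u x) * u x - Gfun g (u x))) = 0 := by
      have : ¬ Integrable (fun x => ((1/2) * g (u x) * u x - Gfun g (u x))) volume := hGhu_nonint
      exact integral_undef this
    have hA0 : (∫ x, ‖gradient u x‖^2) = 0 := by
      have hp := hPoh
      unfold Pfun at hp
      rw [hGh0] at hp
      linarith
    have hGcu_nonint : ¬ Integrable (fun x => Gfun g (c * u x)) volume := by
      intro hcon
      apply hint
      refine Integrable.mono (hcon.const_mul (max (c⁻¹ ^ α) (c⁻¹ ^ β)))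
        ((hGcont.comp hcontu).aestronglyMeasurable) ?_
      filter_upwards with x
      have hmaxpos : (0:ℝ) < max (c⁻¹ ^ α) (c⁻¹ ^ β) :=
        lt_max_of_lt_left (Real.rpow_pos_of_pos (inv_pos.2 hc) α)
      rw [Real.norm_eq_abs, Real.norm_eq_abs, abs_of_nonneg (St9Aux.Gfun_nonneg hg _),
        abs_of_nonneg (mul_nonneg hmaxpos.le (St9Aux.Gfun_nonneg hg _))]
      have h2 := hGscale (c * u x) c⁻¹ (inv_pos.2 hc)
      rwa [inv_mul_cancel_left₀ hc.ne'] at h2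
    have hGcu0 : (∫ x, Gfun g (c * u x)) = 0 := integral_undef hGcu_nonint
    unfold Ifun
    rw [hInt1, hGint, hGcu0, hGu0, hA0]
    simp
end
end

section
/- Let μ > 0 and β < 0. Suppose ψ ∈ H¹_r(ℝ³) is of class C¹ with |x|ψ(x) → 0 as |x| → ∞, and v ∈ H¹_r(ℝ³) is a nonzero function of class C² solving −Δv − βψ(x)²v = μ v₊³ pointwise on ℝ³ (the case λ = 0). Writing v(x) = w(|x|), the zero set {r ∈ (0,∞) : w(r) = 0} is finite. -/
open MeasureTheory Filter Set Topology

noncomputable section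

/-- Euclidean space ℝ³. -/
abbrev E3 := EuclideanSpace ℝ (Fin 3)

/-- `u ∈ H¹_r(ℝ³)`: continuously differentiable, radially symmetric,
with `∫ |u|² < ∞` and `∫ |∇u|² < ∞`. -/
def memH1r (u : E3 → ℝ) : Prop :=
  ContDiff ℝ 1 u ∧ (∃ w : ℝ → ℝ, ∀ x, u x = w ‖x‖) ∧
    Integrable (fun x => (u x) ^ 2) ∧ Integrable (fun x => ‖gradient u x‖ ^ 2)

/-- The Laplacian of `u : ℝ³ → ℝ`. -/
def lap3 (u : E3 → ℝ) (x : E3) : ℝ :=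
  ∑ i, fderiv ℝ (fun y => fderiv ℝ u y (EuclideanSpace.single i 1)) x
    (EuclideanSpace.single i 1)

/-- The coupling nonlinearity `G(u₁,u₂) = (μ₁/4)u₁₊⁴ + (μ₂/4)u₂₊⁴ + (β/2)u₁²u₂²`. -/
def Gsys (μ₁ μ₂ β : ℝ) (u₁ u₂ : E3 → ℝ) (x : E3) : ℝ :=
  μ₁ / 4 * (max (u₁ x) 0) ^ 4 + μ₂ / 4 * (max (u₂ x) 0) ^ 4
    + β / 2 * (u₁ x) ^ 2 * (u₂ x) ^ 2

/-- The functional `I_*(u₁,u₂)`. -/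
def Istar (μ₁ μ₂ β : ℝ) (u₁ u₂ : E3 → ℝ) : ℝ :=
  (1/2) * (∫ x, (‖gradient u₁ x‖ ^ 2 + ‖gradient u₂ x‖ ^ 2))
    - ∫ x, Gsys μ₁ μ₂ β u₁ u₂ x

/-- The Pohozaev functional `P_*(u₁,u₂)`. -/
def Pstar (μ₁ μ₂ β : ℝ) (u₁ u₂ : E3 → ℝ) : ℝ :=
  (∫ x, (‖gradient u₁ x‖ ^ 2 + ‖gradient u₂ x‖ ^ 2))
    - 3 * ∫ x, Gsys μ₁ μ₂ β u₁ u₂ x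

lemma deriv_contDiff_one {g : ℝ → ℝ} (hg2 : ContDiff ℝ 2 g) : ContDiff ℝ 1 (deriv g) := by
  have : ContDiff ℝ (1+1) g := by rwa [one_add_one_eq_two]
  exact (contDiff_succ_iff_deriv.mp this).2.2

lemma second_dir_deriv (v : E3 → ℝ) (hv : ContDiff ℝ 2 v) (x u : E3) :
    fderiv ℝ (fun y => fderiv ℝ v y u) x u
      = deriv (fun t => deriv (fun s => v (x + s • u)) t) (0:ℝ) := by
  have hvd : Differentiable ℝ v := hv.differentiable (by norm_num)
  have hline : ∀ z : E3, ∀ t : ℝ, HasDerivAt (fun s : ℝ => v (z + s • u)) (fderiv ℝ v (z + t • u) u) t := by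
    intro z t
    have h1 : HasDerivAt (fun s : ℝ => z + s • u) u t := by
      simpa using ((hasDerivAt_id t).smul_const u).const_add z
    exact (hvd (z + t • u)).hasFDerivAt.comp_hasDerivAt t h1
  have hF : Differentiable ℝ (fun y => fderiv ℝ v y u) := by
    have h1 : ContDiff ℝ 1 (fderiv ℝ v) := hv.fderiv_right (le_refl _)
    exact (h1.clm_apply contDiff_const).differentiable (by norm_num)
  have h2 : (fun t : ℝ => deriv (fun s => v (x + s • u)) t)
      = fun t : ℝ => fderiv ℝ v (x + t • u) u := funext fun t => (hline x t).deriv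
  rw [h2]
  have h3 : HasDerivAt (fun t : ℝ => fderiv ℝ v (x + t • u) u)
      (fderiv ℝ (fun y => fderiv ℝ v y u) (x + (0:ℝ) • u) u) 0 := by
    have h4 : HasDerivAt (fun s : ℝ => x + s • u) u 0 := by
      simpa using ((hasDerivAt_id (0:ℝ)).smul_const u).const_add x
    exact (hF (x + (0:ℝ) • u)).hasFDerivAt.comp_hasDerivAt 0 h4
  simpa using h3.deriv.symm

lemma norm_mix (r t : ℝ) (i : Fin 3) (hi : i ≠ 0) :
    ‖r • EuclideanSpace.single (0:Fin 3) (1:ℝ) + t • EuclideanSpace.single i (1:ℝ)‖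
      = Real.sqrt (r^2 + t^2) := by
  have hinner : inner ℝ (r • EuclideanSpace.single (0:Fin 3) (1:ℝ))
      (t • EuclideanSpace.single i (1:ℝ)) = (0:ℝ) := by
    rw [real_inner_smul_left, real_inner_smul_right, EuclideanSpace.inner_single_left]
    simp [EuclideanSpace.single_apply]
    exact fun h => absurd h.symm hi
  have h1 : ‖r • EuclideanSpace.single (0:Fin 3) (1:ℝ) + t • EuclideanSpace.single i (1:ℝ)‖^2
      = r^2 + t^2 := by
    rw [norm_add_sq_real, hinner]
    simp [norm_smul, EuclideanSpace.norm_single, abs_sq]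
  rw [← h1, Real.sqrt_sq (norm_nonneg _)]

lemma tangential_second (g : ℝ → ℝ) (hg2 : ContDiff ℝ 2 g) (r : ℝ) (hr : 0 < r) :
    deriv (fun t : ℝ => deriv (fun s : ℝ => g (Real.sqrt (r^2 + s^2))) t) (0:ℝ)
      = deriv g r / r := by
  have hgd : Differentiable ℝ g := hg2.differentiable (by norm_num)
  have hdgc : Continuous (deriv g) := hg2.continuous_deriv (by norm_num)
  have hpos : ∀ t : ℝ, 0 < r^2 + t^2 := fun t => by positivity
  have hsq : ∀ t : ℝ, HasDerivAt (fun s : ℝ => Real.sqrt (r^2 + s^2))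
      (t / Real.sqrt (r^2 + t^2)) t := by
    intro t
    have h1 : HasDerivAt (fun s : ℝ => r^2 + s^2) (2*t) t := by
      simpa using ((hasDerivAt_pow 2 t).const_add (r^2))
    have h2 : HasDerivAt (fun s : ℝ => Real.sqrt (r^2 + s^2)) (1 / (2 * Real.sqrt (r^2 + t^2)) * (2 * t)) t :=
      (Real.hasDerivAt_sqrt (hpos t).ne').comp t h1
    have h3 : Real.sqrt (r^2 + t^2) ≠ 0 := by positivity
    convert h2 using 1
    field_simp
  have hphi' : ∀ t : ℝ, HasDerivAt (fun s : ℝ => g (Real.sqrt (r^2 + s^2)))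
      (deriv g (Real.sqrt (r^2 + t^2)) * (t / Real.sqrt (r^2 + t^2))) t := by
    intro t
    exact ((hgd _).hasDerivAt).comp t (hsq t)
  have hd1 : (fun t : ℝ => deriv (fun s : ℝ => g (Real.sqrt (r^2 + s^2))) t)
      = fun t : ℝ => deriv g (Real.sqrt (r^2 + t^2)) * (t / Real.sqrt (r^2 + t^2)) :=
    funext fun t => (hphi' t).deriv
  rw [hd1]
  have hcont : Tendsto (fun t : ℝ => deriv g (Real.sqrt (r^2 + t^2)) / Real.sqrt (r^2 + t^2))
      (nhds 0) (nhds (deriv g r / r)) := by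
    have hc : ContinuousAt (fun t : ℝ => deriv g (Real.sqrt (r^2 + t^2)) / Real.sqrt (r^2 + t^2)) 0 := by
      apply ContinuousAt.div
      · exact (hdgc.comp (Real.continuous_sqrt.comp (by continuity))).continuousAt
      · exact (Real.continuous_sqrt.comp (by continuity)).continuousAt
      · have h0 : Real.sqrt (r^2 + (0:ℝ)^2) = r := by
          rw [show r^2 + (0:ℝ)^2 = r^2 by ring, Real.sqrt_sq hr.le]
        rw [h0]; exact hr.ne'
    have h0 : Real.sqrt (r^2 + (0:ℝ)^2) = r := by
      rw [show r^2 + (0:ℝ)^2 = r^2 by ring, Real.sqrt_sq hr.le]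
    have := hc.tendsto
    rw [h0] at this
    exact this
  have hslope : HasDerivAt (fun t : ℝ => deriv g (Real.sqrt (r^2 + t^2)) * (t / Real.sqrt (r^2 + t^2)))
      (deriv g r / r) 0 := by
    rw [hasDerivAt_iff_tendsto_slope]
    have hev : (slope (fun t : ℝ => deriv g (Real.sqrt (r^2 + t^2)) * (t / Real.sqrt (r^2 + t^2))) 0)
        =ᶠ[nhdsWithin 0 {(0:ℝ)}ᶜ]
        fun t : ℝ => deriv g (Real.sqrt (r^2 + t^2)) / Real.sqrt (r^2 + t^2) := by
      refine Filter.eventually_of_mem self_mem_nhdsWithin ?_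
      intro t ht
      have ht' : t ≠ 0 := ht
      rw [slope_def_field]
      have hs : Real.sqrt (r^2 + t^2) ≠ 0 := by positivity
      field_simp
      ring
    rw [Filter.tendsto_congr' hev]
    exact hcont.mono_left nhdsWithin_le_nhds
  exact hslope.deriv

lemma lap3_radial (v : E3 → ℝ) (hv : ContDiff ℝ 2 v) (g : ℝ → ℝ)
    (hgdef : g = fun r : ℝ => v (r • EuclideanSpace.single (0 : Fin 3) (1:ℝ)))
    (hrad : ∀ y : E3, v y = g ‖y‖) (r : ℝ) (hr : 0 < r) :
    lap3 v (r • EuclideanSpace.single (0 : Fin 3) (1:ℝ))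
      = deriv (deriv g) r + 2 * (deriv g r / r) := by
  have hg2 : ContDiff ℝ 2 g := by
    rw [hgdef]; exact hv.comp (contDiff_id.smul contDiff_const)
  have hgd : Differentiable ℝ g := hg2.differentiable (by norm_num)
  set x : E3 := r • EuclideanSpace.single (0 : Fin 3) (1:ℝ) with hx
  -- radial term
  have h0 : fderiv ℝ (fun y => fderiv ℝ v y (EuclideanSpace.single (0:Fin 3) (1:ℝ))) x
      (EuclideanSpace.single (0:Fin 3) (1:ℝ)) = deriv (deriv g) r := by
    rw [second_dir_deriv v hv x _]
    have hline : (fun s : ℝ => v (x + s • EuclideanSpace.single (0:Fin 3) (1:ℝ)))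
        = fun s : ℝ => g (r + s) := by
      funext s
      rw [hgdef]
      simp only [hx, ← add_smul]
    have hstep : ∀ t : ℝ, deriv (fun s : ℝ => v (x + s • EuclideanSpace.single (0:Fin 3) (1:ℝ))) t
        = deriv g (r + t) := by
      intro t
      rw [hline]
      have h1 : HasDerivAt (fun s : ℝ => r + s) 1 t := by
        simpa using (hasDerivAt_id t).const_add r
      have : HasDerivAt (fun s : ℝ => g (r + s)) (deriv g (r + t)) t := by
        simpa [Function.comp_def] using ((hgd (r + t)).hasDerivAt).comp t h1
      exact this.deriv
    rw [funext hstep]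
    have h1 : HasDerivAt (fun s : ℝ => r + s) 1 0 := by
      simpa using (hasDerivAt_id (0:ℝ)).const_add r
    have h2 : DifferentiableAt ℝ (deriv g) (r + 0) :=
      ((deriv_contDiff_one hg2).differentiable (by norm_num)) (r + 0)
    have h3 : HasDerivAt (fun t : ℝ => deriv g (r + t)) (deriv (deriv g) (r + 0)) 0 := by
      simpa [Function.comp_def] using h2.hasDerivAt.comp 0 h1
    simpa using h3.deriv
  -- tangential terms
  have htang : ∀ i : Fin 3, i ≠ 0 →
      fderiv ℝ (fun y => fderiv ℝ v y (EuclideanSpace.single i (1:ℝ))) x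
        (EuclideanSpace.single i (1:ℝ)) = deriv g r / r := by
    intro i hi
    rw [second_dir_deriv v hv x _]
    have hline : (fun s : ℝ => v (x + s • EuclideanSpace.single i (1:ℝ)))
        = fun s : ℝ => g (Real.sqrt (r^2 + s^2)) := by
      funext s
      rw [hrad, hx, norm_mix r s i hi]
    rw [show (fun t : ℝ => deriv (fun s : ℝ => v (x + s • EuclideanSpace.single i (1:ℝ))) t)
        = (fun t : ℝ => deriv (fun s : ℝ => g (Real.sqrt (r^2 + s^2))) t) by
      funext t; rw [hline]]
    exact tangential_second g hg2 r hr
  rw [lap3, Fin.sum_univ_three]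
  rw [h0, htang 1 (by decide), htang 2 (by decide)]
  ring

lemma no_negative_interval (g Ψ : ℝ → ℝ) (μ : ℝ) (hg2 : ContDiff ℝ 2 g)
    (hΨ0 : ∀ r, 0 ≤ Ψ r)
    (hode : ∀ r, 0 < r → deriv (deriv g) r
      = -(2/r) * deriv g r + Ψ r * g r - μ * (max (g r) 0)^3)
    (p q : ℝ) (hp : 0 < p) (hpq : p < q) (hgp : g p = 0) (hgq : g q = 0)
    (hneg : ∀ t, t ∈ Ioo p q → g t < 0) : False := by
  have hgd : Differentiable ℝ g := hg2.differentiable (by norm_num)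
  have hdgd : Differentiable ℝ (deriv g) := (deriv_contDiff_one hg2).differentiable (by norm_num)
  set y : ℝ → ℝ := fun r => r * g r with hy
  have hy' : ∀ r, HasDerivAt y (g r + r * deriv g r) r := by
    intro r
    have := (hasDerivAt_id r).mul (hgd r).hasDerivAt
    simpa [add_comm, Pi.mul_def] using this
  have hdy : deriv y = fun r => g r + r * deriv g r := funext fun r => (hy' r).deriv
  have hy'' : ∀ r, HasDerivAt (deriv y) (2 * deriv g r + r * deriv (deriv g) r) r := by
    intro r
    rw [hdy]
    have h1 : HasDerivAt (fun r => g r + r * deriv g r) (deriv g r + (1 * deriv g r + id r * deriv (deriv g) r)) r :=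
      ((hgd r).hasDerivAt).add (((hasDerivAt_id r).mul (hdgd r).hasDerivAt))
    convert h1 using 1
    simp [id]
    ring
  -- concavity of y on [p,q]
  have hconc : ConcaveOn ℝ (Icc p q) y := by
    apply concaveOn_of_deriv2_nonpos (convex_Icc p q)
    · exact (continuous_id.mul hg2.continuous).continuousOn
    · intro t _
      exact ((hy' t).differentiableAt).differentiableWithinAt
    · intro t _
      exact ((hy'' t).differentiableAt).differentiableWithinAt
    · intro t ht
      rw [interior_Icc] at ht
      have htp : 0 < t := hp.trans ht.1
      have hgt : g t < 0 := hneg t ht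
      have hmax : max (g t) 0 = 0 := max_eq_right hgt.le
      have : deriv^[2] y t = 2 * deriv g t + t * deriv (deriv g) t := by
        simp only [Function.iterate_succ, Function.iterate_zero, Function.comp_apply, id]
        exact (hy'' t).deriv
      rw [this, hode t htp, hmax]
      have : 2 * deriv g t + t * (-(2/t) * deriv g t + Ψ t * g t - μ * 0^3)
          = Ψ t * (t * g t) := by
        field_simp
        ring
      rw [this]
      exact mul_nonpos_of_nonneg_of_nonpos (hΨ0 t) (mul_nonpos_of_nonneg_of_nonpos htp.le hgt.le)
  -- evaluate at midpoint
  have h1 := hconc.2 (left_mem_Icc.mpr hpq.le) (right_mem_Icc.mpr hpq.le)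
    (by norm_num : (0:ℝ) ≤ 1/2) (by norm_num : (0:ℝ) ≤ 1/2) (by norm_num)
  simp only [hy, smul_eq_mul, hgp, hgq, mul_zero, add_zero, zero_add] at h1
  have hm : (1/2:ℝ) * p + (1/2:ℝ) * q ∈ Ioo p q := by constructor <;> · simp; linarith
  have h3 : g ((1/2:ℝ) * p + (1/2:ℝ) * q) < 0 := hneg _ hm
  have hm0 : 0 < (1/2:ℝ) * p + (1/2:ℝ) * q := by linarith
  nlinarith [h1, h3, hm0]

lemma gronwall_zero {f F : ℝ → ℝ} {a b K : ℝ} (hf : ∀ t ∈ Icc a b, HasDerivAt f (F t) t)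
    (hbd : ∀ t ∈ Ico a b, ‖F t‖ ≤ K * ‖f t‖) (ha : f a = 0) : ∀ t ∈ Icc a b, f t = 0 := by
  intro t ht
  have hcont : ContinuousOn f (Icc a b) := fun s hs => ((hf s hs).continuousAt).continuousWithinAt
  have h := norm_le_gronwallBound_of_norm_deriv_right_le (f := f) (f' := F) (δ := 0) (K := K) (ε := 0)
    hcont (fun s hs => (hf s (Ico_subset_Icc_self hs)).hasDerivWithinAt)
    (by simp [ha]) (fun s hs => by simpa using hbd s hs) t ht
  rw [gronwallBound_ε0_δ0] at h
  exact norm_le_zero_iff.mp h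

lemma vanish_of_double_zero (g Ψ : ℝ → ℝ) (μ : ℝ) (hg2 : ContDiff ℝ 2 g)
    (hΨc : Continuous Ψ)
    (hode : ∀ r, 0 < r → deriv (deriv g) r
      = -(2/r) * deriv g r + Ψ r * g r - μ * (max (g r) 0)^3)
    (r₀ : ℝ) (hr₀ : 0 < r₀) (h0 : g r₀ = 0) (h0' : deriv g r₀ = 0) :
    ∀ t, 0 < t → g t = 0 := by
  intro t ht
  have hgd : Differentiable ℝ g := hg2.differentiable (by norm_num)
  have hdgd : Differentiable ℝ (deriv g) := (deriv_contDiff_one hg2).differentiable (by norm_num)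
  set a := min t r₀ with hadef
  set b := max t r₀ with hbdef
  have hab : a ≤ b := min_le_max
  have ha0 : 0 < a := lt_min ht hr₀
  have har : a ≤ r₀ := min_le_right _ _
  have hrb : r₀ ≤ b := le_max_right _ _
  obtain ⟨M, hM⟩ := isCompact_Icc.exists_bound_of_continuousOn (s := Icc a b)
    hg2.continuous.continuousOn
  obtain ⟨B, hB⟩ := isCompact_Icc.exists_bound_of_continuousOn (s := Icc a b) hΨc.continuousOn
  have hM0 : 0 ≤ M := le_trans (norm_nonneg _) (hM a (left_mem_Icc.mpr hab))
  have hB0 : 0 ≤ B := le_trans (norm_nonneg _) (hB a (left_mem_Icc.mpr hab))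
  set C : ℝ := B + |μ| * M^2 with hCdef
  have hC0 : 0 ≤ C := by positivity
  set K : ℝ := 1 + 4/a + C with hKdef
  set f : ℝ → ℝ := fun s => g s * g s + deriv g s * deriv g s with hfdef
  set F : ℝ → ℝ := fun s => (deriv g s * g s + g s * deriv g s)
    + (deriv (deriv g) s * deriv g s + deriv g s * deriv (deriv g) s) with hFdef
  have hf' : ∀ s : ℝ, HasDerivAt f (F s) s := by
    intro s
    exact ((hgd s).hasDerivAt.mul (hgd s).hasDerivAt).add
      ((hdgd s).hasDerivAt.mul (hdgd s).hasDerivAt)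
  have hfnn : ∀ s : ℝ, 0 ≤ f s := by
    intro s
    have h1 := mul_self_nonneg (g s)
    have h2 := mul_self_nonneg (deriv g s)
    rw [hfdef]; dsimp only; linarith
  have hbd : ∀ s ∈ Icc a b, ‖F s‖ ≤ K * ‖f s‖ := by
    intro s hs
    have hs0 : 0 < s := lt_of_lt_of_le ha0 hs.1
    set G := g s
    set G' := deriv g s
    set G'' := deriv (deriv g) s
    have hGM : |G| ≤ M := by simpa using hM s hs
    have hΨB : |Ψ s| ≤ B := by simpa using hB s hs
    have hmax1 : (0:ℝ) ≤ max G 0 := le_max_right _ _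
    have hmax2 : max G 0 ≤ |G| := max_le (le_abs_self _) (abs_nonneg _)
    have hmax3 : |(max G 0)^3| ≤ M^2 * |G| := by
      rw [abs_of_nonneg (by positivity)]
      calc (max G 0)^3 = (max G 0)^2 * (max G 0) := by ring
        _ ≤ M^2 * |G| := by
            apply mul_le_mul _ hmax2 hmax1 (by positivity)
            exact pow_le_pow_left₀ hmax1 (le_trans hmax2 hGM) 2
    have h2s : 2/s ≤ 2/a := by gcongr; exact hs.1
    have hodes : G'' = -(2/s) * G' + Ψ s * G - μ * (max G 0)^3 := hode s hs0
    have hG'' : |G''| ≤ (2/a) * |G'| + C * |G| := by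
      rw [hodes]
      calc |(-(2/s) * G' + Ψ s * G - μ * (max G 0)^3)|
          ≤ |(2/s) * G'| + |Ψ s * G| + |μ * (max G 0)^3| := by
            rw [show -(2/s) * G' + Ψ s * G - μ * (max G 0)^3
              = (-((2/s) * G')) + (Ψ s * G + (-(μ * (max G 0)^3))) by ring]
            calc |(-((2/s) * G')) + (Ψ s * G + (-(μ * (max G 0)^3)))|
                ≤ |(-((2/s) * G'))| + |Ψ s * G + (-(μ * (max G 0)^3))| := abs_add_le _ _
              _ ≤ |(-((2/s) * G'))| + (|Ψ s * G| + |(-(μ * (max G 0)^3))|) := by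
                  gcongr; exact abs_add_le _ _
              _ = |(2/s) * G'| + |Ψ s * G| + |μ * (max G 0)^3| := by
                  rw [abs_neg, abs_neg]; ring
        _ ≤ (2/a) * |G'| + B * |G| + |μ| * (M^2 * |G|) := by
            gcongr
            · rw [abs_mul]
              apply mul_le_mul_of_nonneg_right _ (abs_nonneg _)
              rwa [abs_of_nonneg (by positivity : (0:ℝ) ≤ 2/s)]
            · rw [abs_mul]; exact mul_le_mul_of_nonneg_right hΨB (abs_nonneg _)
            · rw [abs_mul]; exact mul_le_mul_of_nonneg_left hmax3 (abs_nonneg _)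
        _ = (2/a) * |G'| + C * |G| := by rw [hCdef]; ring
    have hFeq : F s = 2 * (G * G') + 2 * (G' * G'') := by
      rw [hFdef]; dsimp only; ring
    have hFs : |F s| ≤ 2 * (|G| * |G'|) + 2 * (|G'| * ((2/a) * |G'| + C * |G|)) := by
      calc |F s| = |2 * (G * G') + 2 * (G' * G'')| := by rw [hFeq]
        _ ≤ |2 * (G * G')| + |2 * (G' * G'')| := abs_add_le _ _
        _ = 2 * (|G| * |G'|) + 2 * (|G'| * |G''|) := by
            rw [abs_mul, abs_mul, abs_mul, abs_mul]
            norm_num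
        _ ≤ 2 * (|G| * |G'|) + 2 * (|G'| * ((2/a) * |G'| + C * |G|)) := by
            gcongr
    have hfs : ‖f s‖ = G * G + G' * G' := by
      rw [Real.norm_eq_abs, abs_of_nonneg (hfnn s)]
    rw [Real.norm_eq_abs, hfs]
    have hGG : G * G = |G| * |G| := (abs_mul_abs_self G).symm
    have hGG' : G' * G' = |G'| * |G'| := (abs_mul_abs_self G').symm
    refine le_trans hFs ?_
    rw [hKdef, hGG, hGG']
    have h4a : (0:ℝ) ≤ 4 / a := by positivity
    clear_value a b C K f F G G' G''
    clear hodes hFeq hFs hfs hode hf' hfnn hfdef hFdef hKdef hCdef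
    have ha' : a ≠ 0 := ha0.ne'
    have hA0 : 0 ≤ |G| := abs_nonneg G
    have hD0 : 0 ≤ |G'| := abs_nonneg G'
    generalize hA : |G| = A at *
    generalize hD : |G'| = D at *
    have expand : (1 + 4/a + C) * (A * A + D * D)
        - (2 * (A * D) + 2 * (D * ((2/a) * D + C * A)))
        = (1+C) * (A - D)^2 + (4/a) * (A * A) := by
      field_simp
      ring
    have h1C : (0:ℝ) ≤ 1 + C := by linarith
    linarith [mul_nonneg h1C (sq_nonneg (A - D)),
      mul_nonneg h4a (mul_self_nonneg A), expand]
  have hfr₀ : f r₀ = 0 := by rw [hfdef]; simp [h0, h0']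
  -- forward on [r₀, b]
  have hfwd : ∀ s ∈ Icc r₀ b, f s = 0 := by
    apply gronwall_zero (F := F) (K := K)
    · exact fun s _ => hf' s
    · intro s hs
      exact hbd s ⟨le_trans har hs.1, hs.2.le⟩
    · exact hfr₀
  -- backward on [a, r₀] via reflection
  have hbwd : ∀ s ∈ Icc a r₀, f s = 0 := by
    have key : ∀ s ∈ Icc a r₀, f (a + r₀ - s) = 0 := by
      apply gronwall_zero (F := fun s => -F (a + r₀ - s)) (K := K)
      · intro s _
        have haff : HasDerivAt (fun u : ℝ => a + r₀ - u) (-1) s := by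
          simpa using ((hasDerivAt_id s).const_sub (a + r₀))
        have := (hf' (a + r₀ - s)).comp s haff
        simpa [mul_comm, Function.comp_def] using this
      · intro s hs
        have hmem : a + r₀ - s ∈ Icc a b := by
          constructor
          · simp only [mem_Ico] at hs; linarith [hs.2]
          · simp only [mem_Ico] at hs; have := hs.1; linarith
        simpa using hbd _ hmem
      · simpa using hfr₀
    intro s hs
    have : a + r₀ - (a + r₀ - s) = s := by ring
    have h2 := key (a + r₀ - s) ⟨by simp only [mem_Icc] at hs; linarith [hs.2],
      by simp only [mem_Icc] at hs; linarith [hs.1]⟩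
    rwa [this] at h2
  have hft : f t = 0 := by
    rcases le_or_gt t r₀ with h | h
    · exact hbwd t ⟨min_le_left _ _, h⟩
    · exact hfwd t ⟨h.le, le_max_left _ _⟩
  rw [hfdef] at hft
  dsimp only at hft
  have h1 := mul_self_nonneg (g t)
  have h2 := mul_self_nonneg (deriv g t)
  have h3 : g t * g t = 0 := by linarith
  exact mul_self_eq_zero.mp h3

/-- in the case `λ = 0`, the radial profile of a nonzero solution has
finitely many zeros in `(0,∞)`. -/
theorem statement_15 (μ β : ℝ) (hμ : 0 < μ) (hβ : β < 0)
    (ψ : E3 → ℝ) (hψmem : memH1r ψ) (hψC1 : ContDiff ℝ 1 ψ)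
    (hψdecay : Tendsto (fun x : E3 => ‖x‖ * ψ x) (cocompact E3) (𝓝 0))
    (v : E3 → ℝ) (hvmem : memH1r v) (hvC2 : ContDiff ℝ 2 v) (hvne : v ≠ 0)
    (heq : ∀ x, - lap3 v x - β * (ψ x) ^ 2 * v x = μ * (max (v x) 0) ^ 3) :
    ∀ w : ℝ → ℝ, (∀ x, v x = w ‖x‖) → {r : ℝ | 0 < r ∧ w r = 0}.Finite := by
  intro w hw
  rw [← Set.not_infinite]
  intro hinf
  set e0 : E3 := EuclideanSpace.single (0 : Fin 3) (1:ℝ) with he0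
  set g : ℝ → ℝ := fun r => v (r • e0) with hgdef
  have hg2 : ContDiff ℝ 2 g := hvC2.comp (contDiff_id.smul contDiff_const)
  have hgd : Differentiable ℝ g := hg2.differentiable (by norm_num)
  have hnorm_e0 : ‖e0‖ = 1 := by simp [he0, EuclideanSpace.norm_single]
  have hrad : ∀ y : E3, v y = g ‖y‖ := by
    intro y
    rw [hgdef]
    dsimp only
    rw [hw (‖y‖ • e0), hw y, norm_smul, hnorm_e0]
    simp [abs_of_nonneg (norm_nonneg y)]
  have hwg : ∀ r : ℝ, 0 < r → w r = g r := by
    intro r hr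
    rw [hgdef]
    dsimp only
    rw [hw (r • e0), norm_smul, hnorm_e0]
    simp [abs_of_nonneg hr.le]
  set Ψ : ℝ → ℝ := fun r => -β * (ψ (r • e0))^2 with hΨdef
  have hΨc : Continuous Ψ := by
    apply Continuous.mul continuous_const
    exact (hψC1.continuous.comp (continuous_id.smul continuous_const)).pow 2
  have hΨ0 : ∀ r, 0 ≤ Ψ r := fun r => mul_nonneg (by linarith) (sq_nonneg _)
  -- the radial ODE
  have hode : ∀ r, 0 < r → deriv (deriv g) r
      = -(2/r) * deriv g r + Ψ r * g r - μ * (max (g r) 0)^3 := by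
    intro r hr
    have hlap := lap3_radial v hvC2 g hgdef hrad r hr
    have heq' := heq (r • e0)
    have hv0 : v (r • e0) = g r := rfl
    rw [hlap, hv0] at heq'
    have hdiv : -(2/r) * deriv g r = -(2 * (deriv g r / r)) := by
      field_simp
    rw [hΨdef]
    dsimp only
    rw [hdiv]
    linarith [heq']
  -- no point where both g and g' vanish
  have hnodz : ∀ r, 0 < r → ¬(g r = 0 ∧ deriv g r = 0) := by
    rintro r hr ⟨hz, hz'⟩
    have hzero := vanish_of_double_zero g Ψ μ hg2 hΨc hode r hr hz hz'
    apply hvne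
    funext y
    by_cases hy : y = 0
    · subst hy
      have hg0 : g 0 = 0 := by
        have h1 : Tendsto g (nhdsWithin 0 (Ioi 0)) (nhds (g 0)) :=
          (hg2.continuous.tendsto 0).mono_left nhdsWithin_le_nhds
        have h2 : Tendsto g (nhdsWithin 0 (Ioi 0)) (nhds 0) := by
          apply Tendsto.congr' _ tendsto_const_nhds
          exact Filter.eventually_of_mem self_mem_nhdsWithin fun t ht => (hzero t ht).symm
        exact tendsto_nhds_unique h1 h2
      have h3 : v 0 = g ‖(0:E3)‖ := hrad 0
      simpa [hg0] using h3
    · have hy' : (0:ℝ) < ‖y‖ := norm_pos_iff.mpr hy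
      have := hrad y
      rw [hzero _ hy'] at this
      simpa using this
  -- the zero set of g
  set Z : Set ℝ := {r : ℝ | 0 < r ∧ g r = 0} with hZdef
  have hZinf : Z.Infinite := by
    have hset : {r : ℝ | 0 < r ∧ w r = 0} = Z := by
      ext r
      constructor
      · rintro ⟨h1, h2⟩; exact ⟨h1, by rw [← hwg r h1]; exact h2⟩
      · rintro ⟨h1, h2⟩; exact ⟨h1, by rw [hwg r h1]; exact h2⟩
    rwa [hset] at hinf
  have hZpos : ∀ z ∈ Z, 0 < z := fun z hz => hz.1
  -- a sign lemma
  have hsign : ∀ p q : ℝ, 0 < p → p < q → (∀ t, t ∈ Ioo p q → g t ≠ 0) → g p = 0 → g q = 0 →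
      ∀ t, t ∈ Ioo p q → 0 < g t := by
    intro p q hp hpq hne hgp hgq
    by_cases hnegall : ∀ t ∈ Ioo p q, g t < 0
    · exact (no_negative_interval g Ψ μ hg2 hΨ0 hode p q hp hpq hgp hgq hnegall).elim
    · push_neg at hnegall
      obtain ⟨t0, ht0, ht0'⟩ := hnegall
      have ht0pos : 0 < g t0 := lt_of_le_of_ne ht0' (Ne.symm (hne t0 ht0))
      intro t ht
      by_contra hle
      push_neg at hle
      have htneg : g t < 0 := lt_of_le_of_ne hle (hne t ht)
      have hIVT := intermediate_value_uIcc (a := t) (b := t0) (f := g)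
        hg2.continuous.continuousOn
      have h0mem : (0:ℝ) ∈ Set.uIcc (g t) (g t0) := by
        rw [Set.mem_uIcc]; left; exact ⟨htneg.le, ht0pos.le⟩
      obtain ⟨s, hs, hgs⟩ := hIVT h0mem
      have hsub : Set.uIcc t t0 ⊆ Ioo p q := Set.ordConnected_Ioo.uIcc_subset ht ht0
      exact hne s (hsub hs) hgs
  -- case distinction on accumulation
  by_cases hcase : ∃ n : ℕ, (Z ∩ Icc (1/(n+1) : ℝ) (n+1)).Infinite
  · -- accumulation point in (0,∞)
    obtain ⟨n, hn⟩ := hcase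
    obtain ⟨x, hxK, hx⟩ := hn.exists_accPt_of_subset_isCompact isCompact_Icc inter_subset_right
    have hx' : AccPt x (𝓟 Z) := hx.mono (principal_mono.mpr inter_subset_left)
    have hxpos : 0 < x := lt_of_lt_of_le (by positivity) hxK.1
    have hgx : g x = 0 := by
      have hc : ClusterPt x (𝓟 Z) := by
        have h1 : (𝓝[≠] x ⊓ 𝓟 Z).NeBot := hx'
        exact h1.mono (inf_le_inf_right _ nhdsWithin_le_nhds)
      have hxcl : x ∈ closure Z := mem_closure_iff_clusterPt.mpr hc
      have hsub : closure Z ⊆ {r : ℝ | g r = 0} :=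
        closure_minimal (fun r hr => hr.2) (isClosed_eq hg2.continuous continuous_const)
      exact hsub hxcl
    have hdgx : deriv g x = 0 := by
      have hder := (hgd x).hasDerivAt
      rw [hasDerivAt_iff_tendsto_slope] at hder
      have hl : (𝓝[≠] x ⊓ 𝓟 Z).NeBot := hx'
      have h1 : Tendsto (slope g x) (𝓝[≠] x ⊓ 𝓟 Z) (𝓝 (deriv g x)) :=
        hder.mono_left inf_le_left
      have h2 : Tendsto (slope g x) (𝓝[≠] x ⊓ 𝓟 Z) (𝓝 0) := by
        apply Tendsto.congr' _ tendsto_const_nhds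
        have hZmem : Z ∈ 𝓝[≠] x ⊓ 𝓟 Z := mem_inf_of_right (mem_principal_self Z)
        apply Filter.eventually_of_mem hZmem
        intro z hz
        rw [slope_def_field, hz.2, hgx]
        simp
      exact tendsto_nhds_unique h1 h2
    exact hnodz x hxpos ⟨hgx, hdgx⟩
  · -- zeros are locally finite; find an interior zero with zero-free gaps
    push_neg at hcase
    obtain ⟨T, hTsub, hTcard⟩ := hZinf.exists_subset_card_eq 3
    obtain ⟨z1, z2, z3, hl⟩ := List.length_eq_three.mp
      (by rw [Finset.length_sort]; exact hTcard : (T.sort (· ≤ ·)).length = 3)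
    have hsorted := T.sortedLT_sort.pairwise
    rw [hl] at hsorted
    simp only [List.pairwise_cons, List.mem_cons, List.not_mem_nil] at hsorted
    have h12 : z1 < z2 := by tauto
    have h23 : z2 < z3 := by tauto
    have hmem : ∀ z, z ∈ ({z1, z2, z3} : Set ℝ) → z ∈ Z := by
      intro z hz
      apply hTsub
      rw [Finset.mem_coe, ← Finset.mem_sort (· ≤ ·), hl]
      simpa using hz
    have hz1Z : z1 ∈ Z := hmem z1 (by simp)
    have hz2Z : z2 ∈ Z := hmem z2 (by simp)
    have hz3Z : z3 ∈ Z := hmem z3 (by simp)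
    have hz1pos : 0 < z1 := hz1Z.1
    -- an interval [z1, z3] on which Z is finite
    obtain ⟨n, hnn⟩ := exists_nat_ge (max (1/z1) z3)
    have hn1 : 1/z1 ≤ (n:ℝ) + 1 := le_trans (le_max_left _ _) (by linarith [hnn])
    have hn3 : z3 ≤ (n:ℝ) + 1 := le_trans (le_max_right _ _) (by linarith [hnn])
    have hlow : (1:ℝ)/(n+1) ≤ z1 := by
      rw [div_le_iff₀ (by positivity)]
      rw [div_le_iff₀ hz1pos] at hn1
      linarith
    have hfin : (Z ∩ Icc z1 z3).Finite := by
      apply (hcase n).subset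
      rintro r ⟨hrZ, hr1, hr3⟩
      exact ⟨hrZ, le_trans hlow hr1, le_trans hr3 hn3⟩
    set F : Finset ℝ := hfin.toFinset with hFdef
    -- greatest zero below z2
    have hz1F : z1 ∈ F := hfin.mem_toFinset.mpr ⟨hz1Z, le_refl _, by linarith⟩
    have hz3F : z3 ∈ F := hfin.mem_toFinset.mpr ⟨hz3Z, by linarith, le_refl _⟩
    set G1 : Finset ℝ := F.filter (· < z2) with hG1def
    have hG1ne : G1.Nonempty := ⟨z1, Finset.mem_filter.mpr ⟨hz1F, h12⟩⟩
    set a' : ℝ := G1.max' hG1ne with ha'def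
    have ha'G1 : a' ∈ G1 := G1.max'_mem hG1ne
    have ha'Z : a' ∈ Z := (hfin.mem_toFinset.mp (Finset.mem_filter.mp ha'G1).1).1
    have ha'lt : a' < z2 := (Finset.mem_filter.mp ha'G1).2
    have ha'ge : z1 ≤ a' := G1.le_max' z1 (Finset.mem_filter.mpr ⟨hz1F, h12⟩)
    have hempty1 : ∀ t, t ∈ Ioo a' z2 → g t ≠ 0 := by
      intro t ht hgt
      have htpos : 0 < t := lt_trans ha'Z.1 ht.1
      have htF : t ∈ G1 := Finset.mem_filter.mpr
        ⟨hfin.mem_toFinset.mpr ⟨⟨htpos, hgt⟩, le_trans ha'ge ht.1.le, by linarith [ht.2]⟩, ht.2⟩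
      linarith [G1.le_max' t htF, ht.1]
    -- least zero above z2
    set G2 : Finset ℝ := F.filter (z2 < ·) with hG2def
    have hG2ne : G2.Nonempty := ⟨z3, Finset.mem_filter.mpr ⟨hz3F, h23⟩⟩
    set c' : ℝ := G2.min' hG2ne with hc'def
    have hc'G2 : c' ∈ G2 := G2.min'_mem hG2ne
    have hc'Z : c' ∈ Z := (hfin.mem_toFinset.mp (Finset.mem_filter.mp hc'G2).1).1
    have hc'gt : z2 < c' := (Finset.mem_filter.mp hc'G2).2
    have hc'le : c' ≤ z3 := (hfin.mem_toFinset.mp (Finset.mem_filter.mp hc'G2).1).2.2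
    have hempty2 : ∀ t, t ∈ Ioo z2 c' → g t ≠ 0 := by
      intro t ht hgt
      have htpos : 0 < t := lt_trans hz2Z.1 ht.1
      have htF : t ∈ G2 := Finset.mem_filter.mpr
        ⟨hfin.mem_toFinset.mpr ⟨⟨htpos, hgt⟩, by linarith [ht.1], by linarith [ht.2]⟩, ht.1⟩
      linarith [G2.min'_le t htF, ht.2]
    -- both adjacent intervals positive
    have hz2pos : 0 < z2 := hz2Z.1
    have hpos1 : ∀ t, t ∈ Ioo a' z2 → 0 < g t :=
      hsign a' z2 ha'Z.1 ha'lt hempty1 ha'Z.2 hz2Z.2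
    have hpos2 : ∀ t, t ∈ Ioo z2 c' → 0 < g t :=
      hsign z2 c' hz2pos hc'gt hempty2 hz2Z.2 hc'Z.2
    -- z2 is a local minimum of g
    have hmin : IsLocalMin g z2 := by
      have hIoo : Ioo a' c' ∈ 𝓝 z2 := Ioo_mem_nhds ha'lt hc'gt
      filter_upwards [hIoo] with y hy
      rw [hz2Z.2]
      rcases lt_trichotomy y z2 with h | h | h
      · exact (hpos1 y ⟨hy.1, h⟩).le
      · rw [h, hz2Z.2]
      · exact (hpos2 y ⟨h, hy.2⟩).le
    exact hnodz z2 hz2pos ⟨hz2Z.2, hmin.deriv_eq_zero⟩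
end
end
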